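/- arXiv:1507.03853 — 10 statements merged into one kernel-verified Lean document; each statement's English description precedes it below -/
import Mathlib

section
/- Let M be a finitely generated graded module over a standard graded polynomial ring R = K[x_1,...,x_n] such that all minimal generators of M have degree at most d, and let ℓ ∈ R be a linear form. If the multiplication map ×ℓ : M_{d-1} → M_d is surjective, then the multiplication map ×ℓ : M_{j-1} → M_j is surjective for all j ≥ d. -/
open MvPolynomial

section Helpers

variable {K : Type*} [Field K] {n : ℕ} {M : Type*} [AddCommGroup M]
  [Module (MvPolynomial (Fin n) K) M] [Module K M]
  [IsScalarTower K (MvPolynomial (Fin n) K) M]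
  (ℳ : ℤ → Submodule K M)

/-- Projection onto the degree `j` component. -/
noncomputable def projAux (internal : DirectSum.IsInternal ℳ) (j : ℤ) : M →ₗ[K] M :=
  (ℳ j).subtype ∘ₗ (DirectSum.component K ℤ (fun i => ↥(ℳ i)) j) ∘ₗ
    (LinearEquiv.ofBijective (DirectSum.coeLinearMap ℳ) internal).symm.toLinearMap

variable (internal : DirectSum.IsInternal ℳ)

lemma projAux_mem (j : ℤ) (x : M) : projAux ℳ internal j x ∈ ℳ j :=
  Submodule.coe_mem _

lemma projAux_of_mem_same {j : ℤ} {x : M} (hx : x ∈ ℳ j) :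
    projAux ℳ internal j x = x := by
  simp only [projAux, LinearMap.comp_apply, LinearEquiv.coe_coe]
  rw [← DirectSum.apply_eq_component, internal.ofBijective_coeLinearMap_of_mem hx]
  rfl

lemma projAux_of_mem_ne {i j : ℤ} (hij : i ≠ j) {x : M} (hx : x ∈ ℳ i) :
    projAux ℳ internal j x = 0 := by
  simp only [projAux, LinearMap.comp_apply, LinearEquiv.coe_coe]
  rw [← DirectSum.apply_eq_component, internal.ofBijective_coeLinearMap_of_mem_ne hij hx]
  rfl

lemma projAux_smul
    (smul_mem : ∀ (i : ℕ) (j : ℤ) (r : MvPolynomial (Fin n) K),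
      r ∈ MvPolynomial.homogeneousSubmodule (Fin n) K i → ∀ m ∈ ℳ j, r • m ∈ ℳ ((i : ℤ) + j))
    {e : ℕ} {r : MvPolynomial (Fin n) K} (hr : r.IsHomogeneous e) (j : ℤ) (x : M) :
    projAux ℳ internal j (r • x) = r • projAux ℳ internal (j - e) x := by
  have hx : x ∈ (⨆ i, ℳ i) := by
    rw [internal.submodule_iSup_eq_top]; trivial
  refine Submodule.iSup_induction (motive := fun x =>
    projAux ℳ internal j (r • x) = r • projAux ℳ internal (j - e) x) ℳ hx ?_ ?_ ?_
  · intro i m hm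
    have hrm : r • m ∈ ℳ ((e : ℤ) + i) :=
      smul_mem e i r (hr) m hm
    by_cases h : j = (e : ℤ) + i
    · have h1 : j - e = i := by omega
      rw [h1, projAux_of_mem_same ℳ internal hm,
        projAux_of_mem_same ℳ internal (h ▸ hrm)]
    · have h1 : j - (e : ℤ) ≠ i := by omega
      rw [projAux_of_mem_ne ℳ internal (fun hh => h hh.symm) hrm,
        projAux_of_mem_ne ℳ internal (fun hh => h1 hh.symm) hm, smul_zero]
  · show projAux ℳ internal j (r • (0 : M)) = r • projAux ℳ internal (j - e) (0 : M)
    rw [smul_zero, map_zero, map_zero, smul_zero]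
  · intro a b ha hb
    show projAux ℳ internal j (r • (a + b)) = r • projAux ℳ internal (j - e) (a + b)
    rw [smul_add, map_add, map_add, smul_add, ha, hb]

/-- A homogeneous polynomial of positive degree times an element of `ℳ i` lies in the span of
elements of the form `q • y` with `q` linear and `y ∈ ℳ (j - 1)`. -/
lemma homog_smul_mem_span
    (smul_mem : ∀ (i : ℕ) (j : ℤ) (r : MvPolynomial (Fin n) K),
      r ∈ MvPolynomial.homogeneousSubmodule (Fin n) K i → ∀ m ∈ ℳ j, r • m ∈ ℳ ((i : ℤ) + j))
    {e : ℕ} {r : MvPolynomial (Fin n) K} (hr : r.IsHomogeneous (e + 1)) {i j : ℤ}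
    (hj : (e : ℤ) + 1 + i = j) {m : M} (hm : m ∈ ℳ i) :
    r • m ∈ Submodule.span K {z | ∃ q : MvPolynomial (Fin n) K, q.IsHomogeneous 1 ∧
      ∃ y ∈ ℳ (j - 1), z = q • y} := by
  have hrsum := MvPolynomial.support_sum_monomial_coeff r
  rw [← hrsum, Finset.sum_smul]
  refine Submodule.sum_mem _ ?_
  intro dd hdd
  have hco : coeff dd r ≠ 0 := MvPolynomial.mem_support_iff.1 hdd
  have hdeg : Finsupp.weight (1 : Fin n → ℕ) dd = e + 1 := hr hco
  have hne : ∃ k, dd k ≠ 0 := by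
    by_contra hc
    push_neg at hc
    have h0 : dd = 0 := Finsupp.ext fun k => hc k
    rw [h0, map_zero] at hdeg
    omega
  obtain ⟨k, hk⟩ := hne
  have hle : Finsupp.single k 1 ≤ dd := by
    rw [Finsupp.single_le_iff]; omega
  have hsplit : Finsupp.single k 1 + (dd - Finsupp.single k 1) = dd :=
    add_tsub_cancel_of_le hle
  have hmono : (monomial dd (coeff dd r) : MvPolynomial (Fin n) K) =
      X k * monomial (dd - Finsupp.single k 1) (coeff dd r) := by
    rw [X, monomial_mul, one_mul, hsplit]
  have hdeg2 : Finsupp.weight (1 : Fin n → ℕ) (dd - Finsupp.single k 1) = e := by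
    have h2 := congrArg (Finsupp.weight (1 : Fin n → ℕ)) hsplit
    rw [map_add] at h2
    have h3 : Finsupp.weight (1 : Fin n → ℕ) (Finsupp.single k 1) = 1 := by
      rw [Finsupp.weight_apply, Finsupp.sum_single_index] <;> simp
    omega
  have hq : (monomial (dd - Finsupp.single k 1) (coeff dd r) :
      MvPolynomial (Fin n) K).IsHomogeneous e :=
    isWeightedHomogeneous_monomial 1 _ _ hdeg2
  have hy : (monomial (dd - Finsupp.single k 1) (coeff dd r) :
      MvPolynomial (Fin n) K) • m ∈ ℳ ((e : ℤ) + i) :=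
    smul_mem e i _ (hq) m hm
  have hji : (e : ℤ) + i = j - 1 := by omega
  rw [hji] at hy
  refine Submodule.subset_span ?_
  exact ⟨X k, isHomogeneous_X _ _, _, hy, by rw [hmono, mul_smul]⟩

end Helpers

/-- **Lemma (mod-surj).** Let `M` be a graded module over `R = K[x₁,…,xₙ]` (with grading `ℳ`)
whose minimal generators all have degree at most `d`, and let `ℓ ∈ R` be a linear form.
If `×ℓ : M_{d-1} → M_d` is surjective, then `×ℓ : M_{j-1} → M_j` is surjective for all `j ≥ d`. -/
theorem stmt0 {K : Type*} [Field K] {n : ℕ} {M : Type*} [AddCommGroup M]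
    [Module (MvPolynomial (Fin n) K) M] [Module K M]
    [IsScalarTower K (MvPolynomial (Fin n) K) M]
    (ℳ : ℤ → Submodule K M)
    (internal : DirectSum.IsInternal ℳ)
    (smul_mem : ∀ (i : ℕ) (j : ℤ) (r : MvPolynomial (Fin n) K),
      r ∈ MvPolynomial.homogeneousSubmodule (Fin n) K i → ∀ m ∈ ℳ j, r • m ∈ ℳ ((i : ℤ) + j))
    (hfg : Module.Finite (MvPolynomial (Fin n) K) M)
    (d : ℤ)
    (hgen : Submodule.span (MvPolynomial (Fin n) K) (⋃ j ≤ d, (ℳ j : Set M)) = ⊤)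
    (ℓ : MvPolynomial (Fin n) K) (hℓ : ℓ.IsHomogeneous 1)
    (hsurj : ∀ x ∈ ℳ d, ∃ y ∈ ℳ (d - 1), ℓ • y = x) :
    ∀ j : ℤ, d ≤ j → ∀ x ∈ ℳ j, ∃ y ∈ ℳ (j - 1), ℓ • y = x := by
  classical
  have smulcomm : ∀ (c : K) (p : MvPolynomial (Fin n) K) (y : M),
      p • (c • y) = c • (p • y) := by
    intro c p y
    rw [← algebraMap_smul (MvPolynomial (Fin n) K) c y,
      ← algebraMap_smul (MvPolynomial (Fin n) K) c (p • y), smul_smul, smul_smul, mul_comm]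
  set T : ℤ → Submodule K M := fun j => Submodule.span K
    {z | ∃ q : MvPolynomial (Fin n) K, q.IsHomogeneous 1 ∧ ∃ y ∈ ℳ (j - 1), z = q • y}
    with hT
  -- the set of elements all of whose high-degree components lie in `T`
  let U : Submodule (MvPolynomial (Fin n) K) M :=
  { carrier := {x | ∀ j : ℤ, d < j → projAux ℳ internal j x ∈ T j}
    add_mem' := by
      intro a b ha hb j hj
      rw [map_add]
      exact (T j).add_mem (ha j hj) (hb j hj)
    zero_mem' := by
      intro j hj
      rw [map_zero]; exact (T j).zero_mem
    smul_mem' := by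
      intro r x hx j hj
      have hrsum := MvPolynomial.sum_homogeneousComponent r
      rw [← hrsum, Finset.sum_smul, map_sum]
      refine Submodule.sum_mem _ ?_
      intro e _
      have hcomp : (homogeneousComponent e r).IsHomogeneous e :=
        homogeneousComponent_isHomogeneous e r
      rw [projAux_smul ℳ internal smul_mem hcomp j x]
      rcases e with _ | e'
      · rw [homogeneousComponent_zero, ← MvPolynomial.algebraMap_eq, algebraMap_smul]
        have : j - ((0 : ℕ) : ℤ) = j := by push_cast; ring
        rw [this]
        exact (T j).smul_mem _ (hx j hj)
      · exact homog_smul_mem_span ℳ smul_mem hcomp (by push_cast; ring)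
          (projAux_mem ℳ internal (j - (e' + 1 : ℕ)) x) }
  have hUtop : ∀ x : M, x ∈ U := by
    have hle : Submodule.span (MvPolynomial (Fin n) K) (⋃ j ≤ d, (ℳ j : Set M)) ≤ U := by
      refine Submodule.span_le.2 ?_
      intro x hxmem
      simp only [Set.mem_iUnion] at hxmem
      obtain ⟨i, hid, hxi⟩ := hxmem
      intro j hj
      rw [projAux_of_mem_ne ℳ internal (by omega : i ≠ j) hxi]
      exact (T j).zero_mem
    intro x
    exact hle (hgen ▸ Submodule.mem_top)
  have key : ∀ j : ℤ, d < j → ∀ x ∈ ℳ j, x ∈ T j := by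
    intro j hj x hx
    have := (hUtop x) j hj
    rwa [projAux_of_mem_same ℳ internal hx] at this
  refine Int.le_induction hsurj ?_
  intro j hj ih x hx
  have hxT : x ∈ T (j + 1) := key (j + 1) (by omega) x hx
  -- the K-linear multiplication-by-ℓ map
  let f : M →ₗ[K] M :=
  { toFun := fun y => ℓ • y
    map_add' := fun a b => smul_add ℓ a b
    map_smul' := fun c y => smulcomm c ℓ y }
  have hle : T (j + 1) ≤ Submodule.map f (ℳ j) := by
    refine Submodule.span_le.2 ?_
    rintro z ⟨q, hq, y, hy, rfl⟩
    have hy' : y ∈ ℳ j := by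
      have : j + 1 - 1 = j := by ring
      rwa [this] at hy
    obtain ⟨w, hw, hw2⟩ := ih y hy'
    have hqw : q • w ∈ ℳ j := by
      have := smul_mem 1 (j - 1) q (hq) w hw
      have h1 : ((1 : ℕ) : ℤ) + (j - 1) = j := by push_cast; ring
      rwa [h1] at this
    refine ⟨q • w, hqw, ?_⟩
    show ℓ • (q • w) = q • y
    rw [← hw2, smul_smul, smul_smul, mul_comm]
  obtain ⟨y, hy, hyx⟩ := hle hxT
  have : j + 1 - 1 = j := by ring
  exact ⟨y, by rwa [this], hyx⟩
end

section
/- Let A be a nonzero Artinian standard graded K-algebra and let d be the smallest integer such that the Hilbert function satisfies h_A(d-1) > h_A(d). If A has a nonzero socle element of degree less than d-1, then A does not have the weak Lefschetz property. -/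
open MvPolynomial

noncomputable def comp (K : Type*) [Field K] {n : ℕ} (I : Ideal (MvPolynomial (Fin n) K)) (j : ℤ) :
    Submodule K (MvPolynomial (Fin n) K ⧸ I) :=
  if 0 ≤ j then
    (MvPolynomial.homogeneousSubmodule (Fin n) K j.toNat).map
      (Ideal.Quotient.mkₐ K I).toLinearMap
  else ⊥

noncomputable def hilb (K : Type*) [Field K] {n : ℕ} (I : Ideal (MvPolynomial (Fin n) K)) (j : ℤ) : ℕ :=
  Module.finrank K (comp K I j)

def WLP (K : Type*) [Field K] {n : ℕ} (I : Ideal (MvPolynomial (Fin n) K)) : Prop :=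
  ∃ ℓ : MvPolynomial (Fin n) K, ℓ.IsHomogeneous 1 ∧ ∀ j : ℤ,
    (∀ x ∈ comp K I j, Ideal.Quotient.mk I ℓ * x = 0 → x = 0) ∨
    (comp K I (j + 1) ≤ (comp K I j).map (LinearMap.mulLeft K (Ideal.Quotient.mk I ℓ)))

set_option maxHeartbeats 1000000 in
set_option synthInstance.maxHeartbeats 400000 in
/-- **Proposition (wlp (i)).** Let `A = R/I ≠ 0` be an Artinian standard graded `K`-algebra and
`d` the smallest integer with `h_A(d-1) > h_A(d)`. If `A` has a nonzero socle element of degree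
less than `d - 1`, then `A` does not have the weak Lefschetz property. -/
theorem stmt1 {K : Type*} [Field K] {n : ℕ} (I : Ideal (MvPolynomial (Fin n) K))
    (hhom : ∀ p ∈ I, ∀ j : ℕ, MvPolynomial.homogeneousComponent j p ∈ I)
    (hArt : Module.Finite K (MvPolynomial (Fin n) K ⧸ I))
    (hne : I ≠ ⊤)
    (d : ℤ)
    (hd : hilb K I d < hilb K I (d - 1))
    (hdmin : ∀ d' : ℤ, d' < d → ¬ hilb K I d' < hilb K I (d' - 1))
    (e : ℤ) (he : e < d - 1)
    (s : MvPolynomial (Fin n) K ⧸ I) (hs : s ∈ comp K I e) (hs0 : s ≠ 0)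
    (hsoc : ∀ i : Fin n, Ideal.Quotient.mk I (MvPolynomial.X i) * s = 0) :
    ¬ WLP K I := by
  
  rintro ⟨ℓ, hℓ, hwlp⟩
  haveI : FiniteDimensional K (MvPolynomial (Fin n) K ⧸ I) := hArt
  -- ℓ kills the socle element s
  have hℓs : Ideal.Quotient.mk I ℓ * s = 0 := by
    have hmem : ℓ ∈ Ideal.span (Set.range (MvPolynomial.X : Fin n → MvPolynomial (Fin n) K)) := by
      rw [← Set.image_univ, mem_ideal_span_X_image]
      intro m hm
      have hdeg := hℓ (mem_support_iff.mp hm)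
      have hne0 : m ≠ 0 := by
        rintro rfl
        simp [Finsupp.weight] at hdeg
      obtain ⟨i, hi⟩ := Finsupp.ne_iff.mp hne0
      exact ⟨i, Set.mem_univ i, by simpa using hi⟩
    obtain ⟨f, hf⟩ := Ideal.mem_span_range_iff_exists_fun.mp hmem
    rw [← hf, map_sum, Finset.sum_mul]
    refine Finset.sum_eq_zero fun i _ => ?_
    rw [map_mul, mul_assoc, hsoc i, mul_zero]
  -- the injectivity alternative fails at j = e
  rcases hwlp e with hinj | hsurj
  · exact hs0 (hinj s hs hℓs)
  -- so surjectivity holds, giving a dimension drop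
  set f := LinearMap.mulLeft K (Ideal.Quotient.mk I ℓ)
  set p := comp K I e
  have hmapeq : p.map f = LinearMap.range (f ∘ₗ p.subtype) := by
    rw [LinearMap.range_comp, Submodule.range_subtype]
  have hker : (⟨s, hs⟩ : p) ∈ LinearMap.ker (f ∘ₗ p.subtype) := by
    simp [f, LinearMap.mulLeft_apply, hℓs]
  have hkerpos : 0 < Module.finrank K (LinearMap.ker (f ∘ₗ p.subtype)) := by
    refine (Module.finrank_pos_iff (R := K) (M := LinearMap.ker (f ∘ₗ p.subtype))).mpr ?_
    exact ⟨⟨⟨⟨s, hs⟩, hker⟩, 0, by simp [Subtype.ext_iff, hs0]⟩⟩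
  have hrn := LinearMap.finrank_range_add_finrank_ker (f ∘ₗ p.subtype)
  have hlt : Module.finrank K (p.map f) < Module.finrank K p := by
    rw [hmapeq]; omega
  have h1 : hilb K I (e + 1) ≤ Module.finrank K (p.map f) :=
    Submodule.finrank_mono hsurj
  have h2 : ¬ hilb K I (e + 1) < hilb K I (e + 1 - 1) := hdmin (e + 1) (by omega)
  rw [add_sub_cancel_right] at h2
  have : Module.finrank K p = hilb K I e := rfl
  omega
end

section
/- Let A be an Artinian standard graded K-algebra, ℓ a general linear form, and d ≥ 0 an integer such that: (a) ×ℓ : A_{d-2} → A_{d-1} is injective, (b) ×ℓ : A_{d-1} → A_d is surjective, and (c) A has no socle generators of degree less than d-2. Then A has the weak Lefschetz property. -/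
open MvPolynomial

section AuxWLP

variable {K : Type*} [Field K] {n : ℕ} {I : Ideal (MvPolynomial (Fin n) K)}

lemma comp_neg {j : ℤ} (hj : j < 0) : comp K I j = ⊥ := by
  rw [comp, if_neg (not_le.mpr hj)]

lemma mem_comp {j : ℤ} (hj : 0 ≤ j) {x : MvPolynomial (Fin n) K ⧸ I} :
    x ∈ comp K I j ↔
    ∃ p : MvPolynomial (Fin n) K, p.IsHomogeneous j.toNat ∧ Ideal.Quotient.mk I p = x := by
  rw [comp, if_pos hj]
  simp [Submodule.mem_map, mem_homogeneousSubmodule]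

lemma mul_mem_comp {q : MvPolynomial (Fin n) K} {c : ℕ} (hq : q.IsHomogeneous c)
    {j : ℤ} (hj : 0 ≤ j) {x : MvPolynomial (Fin n) K ⧸ I} (hx : x ∈ comp K I j) :
    Ideal.Quotient.mk I q * x ∈ comp K I (j + c) := by
  obtain ⟨p, hp, rfl⟩ := (mem_comp hj).mp hx
  refine (mem_comp (by omega)).mpr ⟨q * p, ?_, by rw [map_mul]⟩
  have : (j + c).toNat = c + j.toNat := by omega
  rw [this]
  exact hq.mul hp

lemma comp_le_iSup {j : ℤ} (hj : 1 ≤ j) :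
    comp K I j ≤ ⨆ i : Fin n,
      (comp K I (j - 1)).map (LinearMap.mulLeft K (Ideal.Quotient.mk I (X i))) := by
  intro x hx
  obtain ⟨p, hp, rfl⟩ := (mem_comp (by omega)).mp hx
  rw [p.as_sum, map_sum]
  apply Submodule.sum_mem
  intro v hv
  have hdeg : v.degree = j.toNat := by
    rw [Finsupp.degree_eq_weight_one]; exact hp (mem_support_iff.mp hv)
  obtain ⟨i, hi⟩ : ∃ i, v i ≠ 0 := by
    by_contra h
    push_neg at h
    have : v = 0 := Finsupp.ext h
    rw [this, map_zero] at hdeg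
    omega
  have hve : (v - Finsupp.single i 1) + Finsupp.single i 1 = v :=
    tsub_add_cancel_of_le (Finsupp.single_le_iff.mpr (by omega))
  refine Submodule.mem_iSup_of_mem i (Submodule.mem_map.mpr
    ⟨Ideal.Quotient.mk I (monomial (v - Finsupp.single i 1) (coeff v p)), ?_, ?_⟩)
  · have h1 : (Finsupp.single i 1 : Fin n →₀ ℕ).degree = 1 := by
      exact Finsupp.degree_single i 1
    have hdt : (v - Finsupp.single i 1).degree = (j - 1).toNat := by
      have := congrArg Finsupp.degree hve
      rw [Finsupp.degree_eq_weight_one] at this h1 hdeg ⊢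
      rw [map_add] at this
      omega
    exact (mem_comp (by omega)).mpr ⟨_, isHomogeneous_monomial _ hdt, rfl⟩
  · rw [LinearMap.mulLeft_apply, ← map_mul]
    congr 1
    have hve' : Finsupp.single i 1 + (v - Finsupp.single i 1) = v := by
      rw [add_comm]; exact hve
    generalize coeff v p = c
    conv_rhs => rw [← hve', monomial_single_add]
    rw [pow_one]

end AuxWLP

/-- **Proposition (wlp (iii)).** Let `A = R/I` be an Artinian standard graded `K`-algebra,
`ℓ` a (general) linear form and `d ≥ 0` an integer such that
(a) `×ℓ : A_{d-2} → A_{d-1}` is injective, (b) `×ℓ : A_{d-1} → A_d` is surjective, and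
(c) `A` has no socle generators of degree less than `d - 2`.
Then `A` has the weak Lefschetz property. -/
theorem stmt2 {K : Type*} [Field K] {n : ℕ} (I : Ideal (MvPolynomial (Fin n) K))
    (hhom : ∀ p ∈ I, ∀ j : ℕ, MvPolynomial.homogeneousComponent j p ∈ I)
    (hArt : Module.Finite K (MvPolynomial (Fin n) K ⧸ I))
    (ℓ : MvPolynomial (Fin n) K) (hℓ : ℓ.IsHomogeneous 1)
    (d : ℤ) (hd : 0 ≤ d)
    (hinj : ∀ x ∈ comp K I (d - 2), Ideal.Quotient.mk I ℓ * x = 0 → x = 0)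
    (hsurj : comp K I d ≤ (comp K I (d - 1)).map (LinearMap.mulLeft K (Ideal.Quotient.mk I ℓ)))
    (hsoc : ∀ e : ℤ, e < d - 2 → ∀ s ∈ comp K I e,
      (∀ i : Fin n, Ideal.Quotient.mk I (MvPolynomial.X i) * s = 0) → s = 0) :
    WLP K I := by
  refine ⟨ℓ, hℓ, fun j => ?_⟩
  have hInj : ∀ k : ℕ, ∀ x ∈ comp K I (d - 2 - k),
      Ideal.Quotient.mk I ℓ * x = 0 → x = 0 := by
    intro k
    induction k with
    | zero =>
      have e0 : d - 2 - ((0 : ℕ) : ℤ) = d - 2 := by push_cast; ring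
      rw [e0]; exact hinj
    | succ k ih =>
      intro x hx hlx
      rcases lt_or_ge (d - 2 - ((k + 1 : ℕ) : ℤ)) 0 with hneg | hpos
      · rw [comp_neg hneg] at hx
        simpa using hx
      · refine hsoc _ (by push_cast; omega) x hx fun i => ?_
        have h2 := mul_mem_comp (isHomogeneous_X K i) hpos hx
        have e : d - 2 - ((k + 1 : ℕ) : ℤ) + ((1 : ℕ) : ℤ) = d - 2 - k := by
          push_cast; ring
        rw [e] at h2
        exact ih _ h2 (by rw [mul_left_comm, hlx, mul_zero])
  have hSur : ∀ k : ℕ, comp K I (d - 1 + k + 1) ≤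
      (comp K I (d - 1 + k)).map (LinearMap.mulLeft K (Ideal.Quotient.mk I ℓ)) := by
    intro k
    induction k with
    | zero =>
      have e1 : d - 1 + ((0 : ℕ) : ℤ) + 1 = d := by push_cast; ring
      have e2 : d - 1 + ((0 : ℕ) : ℤ) = d - 1 := by push_cast; ring
      rw [e1, e2]; exact hsurj
    | succ k ih =>
      refine le_trans (comp_le_iSup (by push_cast; omega)) (iSup_le fun i => ?_)
      have e : d - 1 + ((k + 1 : ℕ) : ℤ) + 1 - 1 = d - 1 + (k : ℤ) + 1 := by push_cast; ring
      rw [e]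
      rintro x ⟨y, hy, rfl⟩
      obtain ⟨z, hz, rfl⟩ := ih hy
      rcases lt_or_ge (d - 1 + (k : ℤ)) 0 with hneg | hpos
      · rw [comp_neg hneg] at hz
        have hz0 : z = 0 := by simpa using hz
        subst hz0
        simp only [LinearMap.mulLeft_apply, mul_zero]
        exact Submodule.zero_mem _
      · refine ⟨Ideal.Quotient.mk I (X i) * z, ?_, ?_⟩
        · have h2 := mul_mem_comp (isHomogeneous_X K i) hpos hz
          have e2 : d - 1 + (k : ℤ) + ((1 : ℕ) : ℤ) = d - 1 + ((k + 1 : ℕ) : ℤ) := by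
            push_cast; ring
          rwa [e2] at h2
        · simp only [LinearMap.mulLeft_apply]
          ring
  rcases le_or_gt (d - 1) j with hge | hlt
  · right
    set k := (j - (d - 1)).toNat with hk
    have e : d - 1 + (k : ℤ) = j := by omega
    have h := hSur k
    rwa [e] at h
  · left
    intro x hx hlx
    rcases lt_or_ge j 0 with hneg | hpos
    · rw [comp_neg hneg] at hx
      simpa using hx
    · set k := (d - 2 - j).toNat with hk
      have e : d - 2 - (k : ℤ) = j := by omega
      exact hInj k x (by rwa [e]) hlx
end

section
/- Let A = R/I be an Artinian algebra with I a monomial ideal in R = K[x_1,...,x_n], K infinite. Then the following are equivalent: (i) A has the weak Lefschetz property in characteristic zero; (ii) A has the weak Lefschetz property over some field of positive characteristic; (iii) A has the weak Lefschetz property over every field of sufficiently large positive characteristic. -/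
open MvPolynomial

/-- The monomial ideal generated by the monomials with exponent vectors in `S`. -/
noncomputable def monIdeal (K : Type) [Field K] (n : ℕ) (S : Set (Fin n →₀ ℕ)) :
    Ideal (MvPolynomial (Fin n) K) :=
  Ideal.span ((fun s => MvPolynomial.monomial s (1 : K)) '' S)

namespace WlpAux

open Matrix Function

set_option linter.unusedSectionVars false
set_option maxHeartbeats 1000000

section LinAlg

variable {K : Type*} [Field K] {α β : Type*} [Fintype α] [Fintype β]
  [DecidableEq α] [DecidableEq β]

lemma vecMul_eq_sum_smul (v : α → K) (M : Matrix α β K) :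
    v ᵥ* M = ∑ a, v a • M a := by
  funext j
  simp [Matrix.vecMul, dotProduct, Finset.sum_apply]

lemma mulVec_eq_sum_smul (M : Matrix α β K) (v : β → K) :
    M *ᵥ v = ∑ b, v b • Mᵀ b := by
  funext i
  simp [Matrix.mulVec, dotProduct, Finset.sum_apply, mul_comm]

lemma det_ne_zero_of_rows_li {M : Matrix α α K} (h : LinearIndependent K (fun a => M a)) :
    M.det ≠ 0 := by
  intro h0
  obtain ⟨v, hv, hvM⟩ := Matrix.exists_vecMul_eq_zero_iff.mpr h0
  rw [vecMul_eq_sum_smul] at hvM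
  exact hv (funext fun a => Fintype.linearIndependent_iff.mp h v hvM a)

lemma cols_li_of_injective {M : Matrix α β K} (h : Injective (M.mulVec)) :
    LinearIndependent K (fun b => Mᵀ b) := by
  refine Fintype.linearIndependent_iff.mpr fun g hg i => ?_
  have : M *ᵥ g = 0 := by rw [mulVec_eq_sum_smul]; exact hg
  have := h (this.trans (M.mulVec_zero).symm)
  exact congrFun this i

lemma rows_li_of_surjective {M : Matrix α β K} (h : Surjective (M.mulVec)) :
    LinearIndependent K (fun a => M a) := by
  refine Fintype.linearIndependent_iff.mpr fun g hg a₀ => ?_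
  obtain ⟨x, hx⟩ := h (Pi.single a₀ 1)
  have h1 : g ⬝ᵥ (M *ᵥ x) = (g ᵥ* M) ⬝ᵥ x := Matrix.dotProduct_mulVec _ _ _
  rw [hx, vecMul_eq_sum_smul, hg] at h1
  simpa using h1

lemma exists_det_of_cols_li {M : Matrix α β K} (h : LinearIndependent K (fun b => Mᵀ b)) :
    ∃ s : β → α, (M.submatrix s id).det ≠ 0 := by
  classical
  -- rank considerations: rows of M span (β → K)
  have hcard : Module.finrank K (Submodule.span K (Set.range Mᵀ)) = Fintype.card β := by
    simpa using finrank_span_eq_card h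
  have hrank : M.rank = Fintype.card β := by
    rw [Matrix.rank_eq_finrank_span_cols]; exact hcard
  have hrankT : Mᵀ.rank = Fintype.card β := by rw [Matrix.rank_transpose]; exact hrank
  have hspanrows : Submodule.span K (Set.range (fun a => M a)) = ⊤ := by
    have : Module.finrank K (Submodule.span K (Set.range (Mᵀᵀ))) = Fintype.card β := by
      rw [Matrix.rank_eq_finrank_span_cols] at hrankT; exact hrankT
    refine Submodule.eq_top_of_finrank_eq ?_
    rw [show Set.range (fun a => M a) = Set.range Mᵀᵀ by rw [Matrix.transpose_transpose]]
    exact this.trans (Module.finrank_pi K).symm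
  obtain ⟨b, hbsub, hbspan, hbli⟩ := exists_linearIndependent K (Set.range (fun a => M a))
  rw [hspanrows] at hbspan
  have hbfin : b.Finite := Set.Finite.subset (Set.finite_range _) hbsub
  haveI := hbfin.fintype
  have basis : Module.Basis b K (β → K) := Module.Basis.mk hbli (by rw [Subtype.range_coe, hbspan])
  have hcardb : Fintype.card b = Fintype.card β :=
    (Module.finrank_eq_card_basis basis).symm.trans (Module.finrank_pi K)
  have e : β ≃ b := (Fintype.equivOfCardEq hcardb).symm
  choose s' hs' using fun x : b => (hbsub x.2 : (x : β → K) ∈ Set.range (fun a => M a))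
  refine ⟨fun c => s' (e c), det_ne_zero_of_rows_li ?_⟩
  have hrows : (fun c => (M.submatrix (fun c => s' (e c)) id) c) = fun c => ((e c : b) : β → K) := by
    funext c
    simp only [Matrix.submatrix]
    exact (funext fun j => congrFun (hs' (e c)) j)
  rw [hrows]
  exact hbli.comp e e.injective

lemma exists_det_of_injective {M : Matrix α β K} (h : Injective (M.mulVec)) :
    ∃ s : β → α, (M.submatrix s id).det ≠ 0 :=
  exists_det_of_cols_li (cols_li_of_injective h)

lemma exists_det_of_surjective {M : Matrix α β K} (h : Surjective (M.mulVec)) :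
    ∃ t : α → β, (M.submatrix id t).det ≠ 0 := by
  obtain ⟨t, ht⟩ := exists_det_of_cols_li (M := Mᵀ) (by
    simpa [Matrix.transpose_transpose] using rows_li_of_surjective h)
  refine ⟨t, ?_⟩
  rw [show (M.submatrix id t) = (Mᵀ.submatrix t id)ᵀ by ext i j; simp [Matrix.submatrix]]
  rwa [Matrix.det_transpose]

lemma injective_of_det {M : Matrix α β K} (s : β → α) (h : (M.submatrix s id).det ≠ 0) :
    Injective (M.mulVec) := by
  intro x y hxy
  have hz : M *ᵥ (x - y) = 0 := by
    rw [Matrix.mulVec_sub, hxy, sub_self]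
  have hz' : (M.submatrix s id) *ᵥ (x - y) = 0 := by
    funext r
    have : ((M.submatrix s id) *ᵥ (x - y)) r = (M *ᵥ (x - y)) (s r) := by
      simp [Matrix.mulVec, dotProduct, Matrix.submatrix]
    rw [this, hz]; rfl
  by_contra hne
  have : (M.submatrix s id).det = 0 :=
    Matrix.exists_mulVec_eq_zero_iff.mp ⟨x - y, sub_ne_zero.mpr (fun hxy' => hne (by rw [hxy'])), hz'⟩
  · exact h this
  
lemma surjective_of_det {M : Matrix α β K} (t : α → β) (h : (M.submatrix id t).det ≠ 0) :
    Surjective (M.mulVec) := by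
  intro y
  set A := M.submatrix id t with hA
  have hu : IsUnit A.det := isUnit_iff_ne_zero.mpr h
  refine ⟨fun c => ∑ r : α, if t r = c then (A⁻¹ *ᵥ y) r else 0, ?_⟩
  set x := A⁻¹ *ᵥ y with hx
  have hAx : A *ᵥ x = y := by
    rw [hx, Matrix.mulVec_mulVec, Matrix.mul_nonsing_inv _ hu, Matrix.one_mulVec]
  funext r0
  calc (M *ᵥ fun c => ∑ r : α, if t r = c then x r else 0) r0
      = ∑ c, M r0 c * ∑ r, if t r = c then x r else 0 := by
        simp [Matrix.mulVec, dotProduct]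
    _ = ∑ c, ∑ r, if t r = c then M r0 c * x r else 0 := by
        refine Finset.sum_congr rfl fun c _ => ?_
        rw [Finset.mul_sum]
        refine Finset.sum_congr rfl fun r _ => ?_
        split_ifs with hc
        · rfl
        · ring
    _ = ∑ r, ∑ c, if t r = c then M r0 c * x r else 0 := Finset.sum_comm
    _ = ∑ r, M r0 (t r) * x r := by
        refine Finset.sum_congr rfl fun r _ => ?_
        simp
    _ = (A *ᵥ x) r0 := by simp [hA, Matrix.mulVec, dotProduct, Matrix.submatrix]
    _ = y r0 := by rw [hAx]

end LinAlg

variable {n : ℕ}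

def Bad (S : Set (Fin n →₀ ℕ)) (m : Fin n →₀ ℕ) : Prop := ∃ s ∈ S, s ≤ m

def BJ (S : Set (Fin n →₀ ℕ)) (d : ℕ) : Type := {m : Fin n →₀ ℕ // m.degree = d ∧ ¬ Bad S m}

instance (S : Set (Fin n →₀ ℕ)) (d : ℕ) : Finite (BJ S d) := by
  have hf : {m : Fin n →₀ ℕ | m.degree ≤ d}.Finite := Finsupp.finite_of_degree_le d
  haveI := hf.to_subtype
  exact Finite.of_injective
    (fun x : BJ S d => (⟨x.1, le_of_eq x.2.1⟩ : {m : Fin n →₀ ℕ | m.degree ≤ d}))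
    (fun x y hxy => Subtype.ext (by simpa using congrArg Subtype.val hxy))

noncomputable instance (S : Set (Fin n →₀ ℕ)) (d : ℕ) : Fintype (BJ S d) := Fintype.ofFinite _

instance (S : Set (Fin n →₀ ℕ)) (d : ℕ) : DecidableEq (BJ S d) := fun a b =>
  decidable_of_iff (a.1 = b.1) (Subtype.ext_iff).symm

noncomputable instance (S : Set (Fin n →₀ ℕ)) (d : ℕ) :
    Fintype {m : Fin n →₀ ℕ // m.degree = d ∧ ¬ Bad S m} :=
  inferInstanceAs (Fintype (BJ S d))

instance (S : Set (Fin n →₀ ℕ)) (d : ℕ) :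
    DecidableEq {m : Fin n →₀ ℕ // m.degree = d ∧ ¬ Bad S m} :=
  inferInstanceAs (DecidableEq (BJ S d))

lemma degree_eq_sum (m : Fin n →₀ ℕ) : m.degree = ∑ i, m i := by
  rw [Finsupp.degree]
  exact Finset.sum_subset (Finset.subset_univ _) (fun i _ h => Finsupp.notMem_support_iff.mp h)

lemma degree_add (a b : Fin n →₀ ℕ) : (a + b).degree = a.degree + b.degree := by
  simp [degree_eq_sum, Finset.sum_add_distrib]

lemma degree_single_one (i : Fin n) : (Finsupp.single i 1 : Fin n →₀ ℕ).degree = 1 := by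
  simp [degree_eq_sum, Finsupp.single_apply]

noncomputable def Mmat (S : Set (Fin n →₀ ℕ)) (R : Type*) [CommRing R] (u : Fin n → R)
    (d : ℕ) : Matrix (BJ S (d + 1)) (BJ S d) R :=
  fun m' m => ∑ i, if (m.1 : Fin n →₀ ℕ) + Finsupp.single i 1 = m'.1 then u i else 0

lemma Mmat_map {S : Set (Fin n →₀ ℕ)} {R R' : Type*} [CommRing R] [CommRing R']
    (f : R →+* R') (u : Fin n → R) (d : ℕ) :
    (Mmat S R u d).map f = Mmat S R' (f ∘ u) d := by
  ext m' m
  simp only [Mmat, Matrix.map_apply, map_sum]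
  refine Finset.sum_congr rfl fun i _ => ?_
  split_ifs <;> simp

section Field

variable (K : Type) [Field K] (S : Set (Fin n →₀ ℕ))

lemma mem_monIdeal {f : MvPolynomial (Fin n) K} :
    f ∈ monIdeal K n S ↔ ∀ m ∈ f.support, Bad S m := by
  classical
  constructor
  · intro hf
    refine Submodule.span_induction ?_ ?_ ?_ ?_ hf
    · rintro x ⟨s, hs, rfl⟩ m hm
      rw [MvPolynomial.support_monomial, if_neg (one_ne_zero (α := K)), Finset.mem_singleton] at hm
      exact ⟨s, hs, hm ▸ le_refl _⟩
    · intro m hm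
      simp at hm
    · intro x y _ _ hx hy m hm
      rcases Finset.mem_union.mp (MvPolynomial.support_add hm) with h | h
      · exact hx m h
      · exact hy m h
    · intro r x _ hx m hm
      have h1 : m ∈ (r * x).support := by simpa [smul_eq_mul] using hm
      have h2 := MvPolynomial.support_mul r x h1
      rw [Finset.mem_add] at h2
      obtain ⟨m1, hm1, m2, hm2, rfl⟩ := h2
      obtain ⟨s, hs, hle⟩ := hx m2 hm2
      exact ⟨s, hs, hle.trans (le_add_self)⟩
  · intro h
    rw [f.as_sum]
    refine Ideal.sum_mem _ fun m hm => ?_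
    obtain ⟨s, hs, hle⟩ := h m hm
    have : monomial m (coeff m f) = monomial (m - s) (coeff m f) * monomial s 1 := by
      rw [MvPolynomial.monomial_mul, mul_one, tsub_add_cancel_of_le hle]
    rw [this]
    exact Ideal.mul_mem_left _ _ (Ideal.subset_span ⟨s, hs, rfl⟩)

lemma monomial_mem_monIdeal {m : Fin n →₀ ℕ} (a : K) (h : Bad S m) :
    (monomial m a) ∈ monIdeal K n S := by
  classical
  rw [mem_monIdeal]
  intro m' hm'
  rw [MvPolynomial.support_monomial] at hm'
  split_ifs at hm'
  · simp at hm'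
  · rw [Finset.mem_singleton] at hm'
    exact hm' ▸ h

/-- class of the monomial `x^m` in the quotient ring -/
noncomputable def mu (m : Fin n →₀ ℕ) : MvPolynomial (Fin n) K ⧸ monIdeal K n S :=
  Ideal.Quotient.mk (monIdeal K n S) (monomial m 1)

lemma mk_smul (c : K) (x : MvPolynomial (Fin n) K) :
    Ideal.Quotient.mk (monIdeal K n S) (c • x) = c • Ideal.Quotient.mk (monIdeal K n S) x :=
  rfl

lemma mk_monomial (m : Fin n →₀ ℕ) (a : K) :
    Ideal.Quotient.mk (monIdeal K n S) (monomial m a) = a • mu K S m := by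
  rw [mu, ← mk_smul, MvPolynomial.smul_monomial, smul_eq_mul, mul_one]

lemma mu_eq_zero {m : Fin n →₀ ℕ} (h : Bad S m) : mu K S m = 0 := by
  rw [mu, Ideal.Quotient.eq_zero_iff_mem]
  exact monomial_mem_monIdeal K S 1 h

/-- the linear parametrization of the degree-`d` component by monomial coordinates -/
noncomputable def phi (d : ℕ) : (BJ S d → K) →ₗ[K] (MvPolynomial (Fin n) K ⧸ monIdeal K n S) where
  toFun c := ∑ m : BJ S d, c m • mu K S m.1
  map_add' x y := by simp [add_smul, Finset.sum_add_distrib]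
  map_smul' r x := by
    simp only [Pi.smul_apply, smul_eq_mul, RingHom.id_apply]
    rw [Finset.smul_sum]
    exact Finset.sum_congr rfl fun m _ => (smul_smul r (x m) _).symm

lemma phi_apply (d : ℕ) (c : BJ S d → K) : phi K S d c = ∑ m : BJ S d, c m • mu K S m.1 := rfl

lemma phi_injective (d : ℕ) : Injective (phi K S d) := by
  rw [injective_iff_map_eq_zero]
  intro c hc
  have hmk : Ideal.Quotient.mk (monIdeal K n S) (∑ m : BJ S d, monomial m.1 (c m)) = 0 := by
    rw [map_sum, ← hc, phi_apply]
    exact Finset.sum_congr rfl fun m _ => mk_monomial K S m.1 (c m)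
  rw [Ideal.Quotient.eq_zero_iff_mem, mem_monIdeal] at hmk
  funext m₀
  by_contra hne
  have hcoeff : coeff m₀.1 (∑ m : BJ S d, monomial m.1 (c m)) = c m₀ := by
    classical
    rw [MvPolynomial.coeff_sum]
    have heq : ∀ m : BJ S d, coeff m₀.1 (monomial m.1 (c m)) = if m = m₀ then c m₀ else 0 := by
      intro m
      rw [MvPolynomial.coeff_monomial]
      by_cases h : m = m₀
      · subst h; simp
      · rw [if_neg h, if_neg (fun he => h (Subtype.ext he))]
    rw [Finset.sum_congr rfl (fun m _ => heq m)]
    simp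
  have hsupp : m₀.1 ∈ (∑ m : BJ S d, monomial m.1 (c m)).support := by
    rw [MvPolynomial.mem_support_iff, hcoeff]; exact hne
  exact m₀.2.2 (hmk m₀.1 hsupp)

lemma homog_span (d : ℕ) :
    homogeneousSubmodule (Fin n) K d
      = Submodule.span K ((fun m => monomial m (1:K)) '' {m | m.degree = d}) := by
  apply le_antisymm
  · intro p hp
    rw [mem_homogeneousSubmodule] at hp
    rw [p.as_sum]
    refine Submodule.sum_mem _ fun m hm => ?_
    have hdeg : m.degree = d := by
      by_contra hne
      exact (MvPolynomial.mem_support_iff.mp hm) (hp.coeff_eq_zero hne)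
    have : monomial m (coeff m p) = (coeff m p) • monomial m (1:K) := by
      rw [MvPolynomial.smul_monomial, smul_eq_mul, mul_one]
    rw [this]
    exact Submodule.smul_mem _ _ (Submodule.subset_span ⟨m, hdeg, rfl⟩)
  · rw [Submodule.span_le]
    rintro x ⟨m, hm, rfl⟩
    rw [SetLike.mem_coe, mem_homogeneousSubmodule]
    exact isHomogeneous_monomial _ hm

lemma comp_natCast (d : ℕ) :
    _root_.comp K (monIdeal K n S) (d : ℤ)
      = Submodule.span K (Set.range fun m : BJ S d => mu K S m.1) := by
  rw [show _root_.comp K (monIdeal K n S) ((d : ℕ) : ℤ)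
        = (homogeneousSubmodule (Fin n) K d).map
            (Ideal.Quotient.mkₐ K (monIdeal K n S)).toLinearMap by
      unfold _root_.comp
      rw [if_pos (by positivity), Int.toNat_natCast]]
  rw [homog_span, Submodule.map_span]
  apply le_antisymm
  · rw [Submodule.span_le]
    rintro x ⟨p, ⟨m, hm, rfl⟩, rfl⟩
    by_cases hb : Bad S m
    · have : (Ideal.Quotient.mkₐ K (monIdeal K n S)).toLinearMap (monomial m 1) = 0 := by
        simp only [AlgHom.toLinearMap_apply, Ideal.Quotient.mkₐ_eq_mk]
        rw [Ideal.Quotient.eq_zero_iff_mem]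
        exact monomial_mem_monIdeal K S 1 hb
      rw [this]
      exact Submodule.zero_mem _
    · refine Submodule.subset_span ⟨⟨m, hm, hb⟩, ?_⟩
      simp only [AlgHom.toLinearMap_apply, Ideal.Quotient.mkₐ_eq_mk]
      rfl
  · rw [Submodule.span_le]
    rintro x ⟨m, rfl⟩
    refine Submodule.subset_span ⟨monomial m.1 1, ⟨m.1, m.2.1, rfl⟩, ?_⟩
    simp only [AlgHom.toLinearMap_apply, Ideal.Quotient.mkₐ_eq_mk]
    rfl

lemma range_phi (d : ℕ) :
    LinearMap.range (phi K S d) = _root_.comp K (monIdeal K n S) (d : ℤ) := by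
  rw [comp_natCast]
  apply le_antisymm
  · rintro x ⟨c, rfl⟩
    rw [phi_apply]
    exact Submodule.sum_mem _ fun m _ =>
      Submodule.smul_mem _ _ (Submodule.subset_span ⟨m, rfl⟩)
  · rw [Submodule.span_le]
    rintro x ⟨m, rfl⟩
    refine ⟨Pi.single m 1, ?_⟩
    rw [phi_apply]
    rw [Finset.sum_eq_single m]
    · simp
    · intro m' _ hne
      rw [Pi.single_eq_of_ne hne, zero_smul]
    · intro h
      exact absurd (Finset.mem_univ m) h

lemma comp_neg {j : ℤ} (hj : j < 0) : _root_.comp K (monIdeal K n S) j = ⊥ := by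
  unfold _root_.comp
  rw [if_neg (not_le.mpr hj)]

lemma comp_empty (d : ℕ) (h : IsEmpty (BJ S d)) :
    _root_.comp K (monIdeal K n S) (d : ℤ) = ⊥ := by
  rw [comp_natCast]
  rw [Set.range_eq_empty _]
  exact Submodule.span_empty


/-- the generic linear form with coefficients `a` -/
noncomputable def ell (a : Fin n → K) : MvPolynomial (Fin n) K :=
  ∑ i, monomial (Finsupp.single i 1) (a i)

lemma ell_isHomogeneous (a : Fin n → K) : (ell K a).IsHomogeneous 1 :=
  IsHomogeneous.sum _ _ _ fun i _ => isHomogeneous_monomial _ (degree_single_one i)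

lemma eq_single_of_degree_one {m : Fin n →₀ ℕ} (h : m.degree = 1) :
    ∃ i, m = Finsupp.single i 1 := by
  classical
  have hne : m.support.Nonempty := by
    rcases Finset.eq_empty_or_nonempty m.support with he | hne
    · exfalso
      have : m = 0 := by
        ext i
        exact Finsupp.notMem_support_iff.mp (he ▸ Finset.notMem_empty i)
      rw [this] at h
      simp [Finsupp.degree] at h
    · exact hne
  obtain ⟨i, hi⟩ := hne
  have hsum : m i + ∑ j ∈ m.support.erase i, m j = 1 := by
    rw [Finset.add_sum_erase _ _ hi]
    exact h
  have hmi : 1 ≤ m i := Nat.one_le_iff_ne_zero.mpr (Finsupp.mem_support_iff.mp hi)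
  have hrest : ∑ j ∈ m.support.erase i, m j = 0 := by omega
  have hmi1 : m i = 1 := by omega
  refine ⟨i, ?_⟩
  have hsub : m.support ⊆ {i} := by
    intro j hj
    rw [Finset.mem_singleton]
    by_contra hne
    have hj' : j ∈ m.support.erase i := Finset.mem_erase.mpr ⟨hne, hj⟩
    have := (Finset.sum_eq_zero_iff.mp hrest) j hj'
    exact (Finsupp.mem_support_iff.mp hj) this
  exact Finsupp.eq_single_iff.mpr ⟨hsub, hmi1⟩

lemma homog_one_eq_ell {ℓ : MvPolynomial (Fin n) K} (h : ℓ.IsHomogeneous 1) :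
    ℓ = ell K (fun i => coeff (Finsupp.single i 1) ℓ) := by
  classical
  apply MvPolynomial.ext
  intro m
  rw [ell, MvPolynomial.coeff_sum]
  simp only [MvPolynomial.coeff_monomial]
  by_cases hm : ∃ i₀, m = Finsupp.single i₀ 1
  · obtain ⟨i₀, rfl⟩ := hm
    rw [Finset.sum_congr rfl (fun i _ =>
      if_congr (Finsupp.single_left_inj (one_ne_zero)) rfl rfl)]
    rw [Finset.sum_ite_eq' Finset.univ i₀ (fun i => coeff (Finsupp.single i 1) ℓ)]
    simp
  · rw [Finset.sum_eq_zero (fun i _ => if_neg (fun he => hm ⟨i, he.symm⟩))]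
    by_contra hne
    have hdd : m.degree = 1 := by
      by_contra hdeg
      exact hne (h.coeff_eq_zero hdeg)
    exact hm (eq_single_of_degree_one hdd)

lemma intertwine (a : Fin n → K) (d : ℕ) (c : BJ S d → K) :
    Ideal.Quotient.mk (monIdeal K n S) (ell K a) * phi K S d c
      = phi K S (d + 1) ((Mmat S K a d) *ᵥ c) := by
  classical
  have h1 : ∀ m : BJ S d,
      Ideal.Quotient.mk (monIdeal K n S) (ell K a) * mu K S m.1
        = ∑ i, a i • mu K S (m.1 + Finsupp.single i 1) := by
    intro m
    rw [mu, ← _root_.map_mul, ell, Finset.sum_mul, map_sum]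
    refine Finset.sum_congr rfl fun i _ => ?_
    rw [MvPolynomial.monomial_mul, mul_one, add_comm, mk_monomial]
  have h2 : ∀ (m : BJ S d) (i : Fin n),
      (∑ m' : BJ S (d+1), if m.1 + Finsupp.single i 1 = m'.1 then (a i * c m) • mu K S m'.1 else 0)
        = (c m * a i) • mu K S (m.1 + Finsupp.single i 1) := by
    intro m i
    by_cases hb : Bad S (m.1 + Finsupp.single i 1)
    · rw [Finset.sum_eq_zero, mu_eq_zero K S hb, smul_zero]
      intro m' _
      exact if_neg (fun he => m'.2.2 (by rw [← he]; exact hb))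
    · have hdeg : (m.1 + Finsupp.single i 1).degree = d + 1 := by
        rw [degree_add, m.2.1, degree_single_one]
      have h0 : ∀ m' ∈ (Finset.univ : Finset (BJ S (d+1))),
          m' ≠ (⟨m.1 + Finsupp.single i 1, hdeg, hb⟩ : BJ S (d+1)) →
          (if m.1 + Finsupp.single i 1 = m'.1 then (a i * c m) • mu K S m'.1 else 0) = 0 :=
        fun m' _ hne => if_neg (fun he => hne (Subtype.ext he).symm)
      have h1 : (⟨m.1 + Finsupp.single i 1, hdeg, hb⟩ : BJ S (d+1)) ∉ (Finset.univ : Finset (BJ S (d+1))) →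
          (if m.1 + Finsupp.single i 1 =
              (⟨m.1 + Finsupp.single i 1, hdeg, hb⟩ : BJ S (d+1)).1
            then (a i * c m) • mu K S (⟨m.1 + Finsupp.single i 1, hdeg, hb⟩ : BJ S (d+1)).1 else 0) = 0 :=
        fun hnb => absurd (Finset.mem_univ _) hnb
      exact (Finset.sum_eq_single _ h0 h1).trans (by rw [if_pos rfl, mul_comm])
  calc Ideal.Quotient.mk (monIdeal K n S) (ell K a) * phi K S d c
      = ∑ m : BJ S d, ∑ i : Fin n, (c m * a i) • mu K S (m.1 + Finsupp.single i 1) := by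
        rw [phi_apply, Finset.mul_sum]
        refine Finset.sum_congr rfl fun m _ => ?_
        rw [mul_smul_comm, h1 m, Finset.smul_sum]
        exact Finset.sum_congr rfl fun i _ => smul_smul (c m) (a i) _
    _ = ∑ m : BJ S d, ∑ i : Fin n, ∑ m' : BJ S (d+1),
          (if m.1 + Finsupp.single i 1 = m'.1 then (a i * c m) • mu K S m'.1 else 0) := by
        exact Finset.sum_congr rfl fun m _ => Finset.sum_congr rfl fun i _ => (h2 m i).symm
    _ = ∑ m : BJ S d, ∑ m' : BJ S (d+1), ∑ i : Fin n,
          (if m.1 + Finsupp.single i 1 = m'.1 then (a i * c m) • mu K S m'.1 else 0) := by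
        exact Finset.sum_congr rfl fun m _ => Finset.sum_comm
    _ = ∑ m' : BJ S (d+1), ∑ m : BJ S d, ∑ i : Fin n,
          (if m.1 + Finsupp.single i 1 = m'.1 then (a i * c m) • mu K S m'.1 else 0) := by
        exact Finset.sum_comm
    _ = phi K S (d + 1) ((Mmat S K a d) *ᵥ c) := by
        simp only [phi_apply, Matrix.mulVec, dotProduct, Mmat, Finset.sum_mul,
          Finset.sum_smul, ite_mul, zero_mul, ite_smul, zero_smul]

lemma inj_iff (a : Fin n → K) (d : ℕ) :
    (∀ x ∈ _root_.comp K (monIdeal K n S) (d : ℤ),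
        Ideal.Quotient.mk (monIdeal K n S) (ell K a) * x = 0 → x = 0)
      ↔ Injective ((Mmat S K a d).mulVec) := by
  constructor
  · intro h
    have h0 : ∀ c, (Mmat S K a d) *ᵥ c = 0 → c = 0 := by
      intro c hc0
      have hx : phi K S d c ∈ _root_.comp K (monIdeal K n S) (d : ℤ) := by
        rw [← range_phi]; exact ⟨c, rfl⟩
      have hz := h _ hx (by rw [intertwine, hc0, map_zero])
      exact (injective_iff_map_eq_zero _).mp (phi_injective K S d) c hz
    intro c1 c2 hc
    have : (Mmat S K a d) *ᵥ (c1 - c2) = 0 := by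
      rw [Matrix.mulVec_sub, hc, sub_self]
    have := h0 _ this
    exact sub_eq_zero.mp this
  · intro h x hx h0
    have hx' : x ∈ LinearMap.range (phi K S d) := by rw [range_phi]; exact hx
    obtain ⟨c, rfl⟩ := hx'
    rw [intertwine] at h0
    have hMc : (Mmat S K a d) *ᵥ c = 0 :=
      (injective_iff_map_eq_zero _).mp (phi_injective K S (d+1)) _ h0
    have hc0 : c = 0 := by
      apply h
      rw [hMc, Matrix.mulVec_zero]
    rw [hc0, map_zero]

lemma surj_iff (a : Fin n → K) (d : ℕ) :
    (_root_.comp K (monIdeal K n S) ((d : ℤ) + 1) ≤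
        (_root_.comp K (monIdeal K n S) (d : ℤ)).map
          (LinearMap.mulLeft K (Ideal.Quotient.mk (monIdeal K n S) (ell K a))))
      ↔ Surjective ((Mmat S K a d).mulVec) := by
  have hcast : ((d : ℤ) + 1) = (((d + 1 : ℕ)) : ℤ) := by push_cast; ring
  constructor
  · intro h y
    have hy : phi K S (d+1) y ∈ _root_.comp K (monIdeal K n S) ((d : ℤ) + 1) := by
      rw [hcast, ← range_phi]; exact ⟨y, rfl⟩
    obtain ⟨x, hx, hmul⟩ := Submodule.mem_map.mp (h hy)
    have hx' : x ∈ LinearMap.range (phi K S d) := by rw [range_phi]; exact hx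
    obtain ⟨c, rfl⟩ := hx'
    refine ⟨c, ?_⟩
    apply phi_injective K S (d+1)
    rw [← intertwine]
    rw [LinearMap.mulLeft_apply] at hmul
    exact hmul
  · intro h x hx
    rw [hcast] at hx
    have hx' : x ∈ LinearMap.range (phi K S (d+1)) := by rw [range_phi]; exact hx
    obtain ⟨y, rfl⟩ := hx'
    obtain ⟨c, hc⟩ := h y
    refine Submodule.mem_map.mpr ⟨phi K S d c, ?_, ?_⟩
    · rw [← range_phi]; exact ⟨c, rfl⟩
    · rw [LinearMap.mulLeft_apply, intertwine, hc]


lemma Mmat_X_mul (d : ℕ) (m' : BJ S (d+1)) (m : BJ S d) :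
    Mmat S (MvPolynomial (Fin n) K) X d m' m * monomial m.1 (1:K)
      = monomial m'.1 (1:K) * Mmat S (MvPolynomial (Fin n) K) (fun _ => 1) d m' m := by
  classical
  rw [Mmat, Mmat, Finset.sum_mul, Finset.mul_sum]
  refine Finset.sum_congr rfl fun i _ => ?_
  split_ifs with h
  · rw [X, MvPolynomial.monomial_mul]
    simp only [one_mul, mul_one]
    rw [add_comm (Finsupp.single i 1) m.1, h]
  · simp

lemma det_transfer (d : ℕ) {γ : Type} [Fintype γ] [DecidableEq γ]
    (s : γ → BJ S (d+1)) (t : γ → BJ S d) (a : Fin n → K)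
    (h : ((Mmat S K a d).submatrix s t).det ≠ 0) :
    ((Mmat S K (fun _ => 1) d).submatrix s t).det ≠ 0 := by
  classical
  have hax : ⇑(MvPolynomial.eval a) ∘ X = a := by
    funext i
    simp
  have hmap : (Mmat S K a d) = ((Mmat S (MvPolynomial (Fin n) K) X d).map (MvPolynomial.eval a)) := by
    rw [Mmat_map (MvPolynomial.eval a) X d, hax]
  have h1 : (MvPolynomial.eval a) (((Mmat S (MvPolynomial (Fin n) K) X d).submatrix s t).det) ≠ 0 := by
    rw [RingHom.map_det, RingHom.mapMatrix_apply, ← Matrix.submatrix_map, ← hmap]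
    exact h
  have hP : ((Mmat S (MvPolynomial (Fin n) K) X d).submatrix s t).det ≠ 0 :=
    fun h0 => h1 (by rw [h0, map_zero])
  have hdiag : ((Mmat S (MvPolynomial (Fin n) K) X d).submatrix s t)
        * Matrix.diagonal (fun c => monomial (t c).1 (1:K))
      = Matrix.diagonal (fun c => monomial (s c).1 (1:K))
        * ((Mmat S (MvPolynomial (Fin n) K) (fun _ => 1) d).submatrix s t) := by
    refine Matrix.ext fun r c => ?_
    rw [Matrix.mul_diagonal, Matrix.diagonal_mul]
    exact Mmat_X_mul K S d (s r) (t c)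
  have hdet := congrArg Matrix.det hdiag
  rw [Matrix.det_mul, Matrix.det_mul, Matrix.det_diagonal, Matrix.det_diagonal] at hdet
  intro h0
  have hC : ((Mmat S (MvPolynomial (Fin n) K) (fun _ => 1) d).submatrix s t).det
      = C (((Mmat S K (fun _ => 1) d).submatrix s t).det) := by
    have hc1 : ⇑(C : K →+* MvPolynomial (Fin n) K) ∘ (fun _ : Fin n => (1:K))
        = (fun _ : Fin n => (1 : MvPolynomial (Fin n) K)) := by
      funext i
      simp
    rw [show (Mmat S (MvPolynomial (Fin n) K) (fun _ => 1) d)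
        = (Mmat S K (fun _ => 1) d).map (C : K →+* MvPolynomial (Fin n) K) by
      rw [Mmat_map, hc1]]
    rw [Matrix.submatrix_map, ← RingHom.mapMatrix_apply, ← RingHom.map_det]
  rw [hC, h0, map_zero, mul_zero] at hdet
  have hprod : (∏ c, monomial (t c).1 (1:K)) ≠ 0 :=
    Finset.prod_ne_zero_iff.mpr fun c _ => fun hz => one_ne_zero (α := K)
      (by simpa [MvPolynomial.monomial_eq_zero] using hz)
  exact hP (by
    rcases mul_eq_zero.mp hdet with h' | h'
    · exact h'
    · exact absurd h' hprod)

end Field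

section Cast

variable (K : Type) [Field K] (S : Set (Fin n →₀ ℕ))

lemma Mmat_one_cast (d : ℕ) :
    Mmat S K (fun _ => 1) d = (Mmat S ℤ (fun _ => 1) d).map (Int.cast : ℤ → K) := by
  have hc1 : ⇑(Int.castRingHom K) ∘ (fun _ : Fin n => (1:ℤ)) = (fun _ => (1:K)) := by
    funext i
    simp
  rw [show ((Int.cast : ℤ → K) : ℤ → K) = ⇑(Int.castRingHom K) from rfl, Mmat_map, hc1]

lemma det_cast_sub {γ : Type} [Fintype γ] [DecidableEq γ] (d : ℕ)
    (s : γ → BJ S (d+1)) (t : γ → BJ S d) :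
    ((Mmat S K (fun _ => 1) d).submatrix s t).det
      = ((((Mmat S ℤ (fun _ => 1) d).submatrix s t).det : ℤ) : K) := by
  rw [Mmat_one_cast K S d,
    show ((Int.cast : ℤ → K) : ℤ → K) = ⇑(Int.castRingHom K) from rfl,
    Matrix.submatrix_map, ← RingHom.mapMatrix_apply, ← RingHom.map_det]

end Cast

section Main

variable (S : Set (Fin n →₀ ℕ))

/-- degree bound -/
def Dbound (k : Fin n → ℕ) : ℕ := 1 + ∑ i, k i

lemma isEmpty_BJ (k : Fin n → ℕ) (hk : ∀ i, Finsupp.single i (k i) ∈ S)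
    {d : ℕ} (hd : Dbound k ≤ d) : IsEmpty (BJ S d) := by
  constructor
  rintro ⟨m, hdeg, hbad⟩
  apply hbad
  have hsum : ∑ i, k i < ∑ i, m i := by
    rw [← degree_eq_sum, hdeg]
    have : 1 + ∑ i, k i ≤ d := hd
    omega
  obtain ⟨i, _, hi⟩ := Finset.exists_lt_of_sum_lt hsum
  exact ⟨Finsupp.single i (k i), hk i, Finsupp.single_le_iff.mpr hi.le⟩

/-- the combinatorial data of a nonvanishing maximal minor -/
def Psi (j : ℕ) (dd : ℤ) : Prop :=
  (∃ s : BJ S j → BJ S (j+1), dd = ((Mmat S ℤ (fun _ => 1) j).submatrix s id).det) ∨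
  (∃ t : BJ S (j+1) → BJ S j, dd = ((Mmat S ℤ (fun _ => 1) j).submatrix id t).det)

/-- the characteristic-dependent full-rank condition -/
def Phi (K : Type) [Field K] (D : ℕ) : Prop :=
  ∀ j < D, ∃ dd : ℤ, ((dd : K) ≠ 0) ∧ Psi S j dd

theorem wlp_iff_phi (K : Type) [Field K] (k : Fin n → ℕ)
    (hk : ∀ i, Finsupp.single i (k i) ∈ S) :
    WLP K (monIdeal K n S) ↔ Phi S K (Dbound k) := by
  constructor
  · rintro ⟨ℓ, hhom, hj⟩ j hjD
    set a : Fin n → K := fun i => coeff (Finsupp.single i 1) ℓ with ha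
    have hℓ : ℓ = ell K a := homog_one_eq_ell K hhom
    rw [hℓ] at hj
    rcases hj (j : ℤ) with hinj | hsurj
    · have hInj : Injective ((Mmat S K a j).mulVec) := (inj_iff K S a j).mp hinj
      obtain ⟨s, hs⟩ := exists_det_of_injective hInj
      have hone := det_transfer K S j s id a hs
      refine ⟨((Mmat S ℤ (fun _ => 1) j).submatrix s id).det, ?_, Or.inl ⟨s, rfl⟩⟩
      rw [← det_cast_sub]
      exact hone
    · have hSurj : Surjective ((Mmat S K a j).mulVec) := (surj_iff K S a j).mp hsurj
      obtain ⟨t, ht⟩ := exists_det_of_surjective hSurj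
      have hone := det_transfer K S j id t a ht
      refine ⟨((Mmat S ℤ (fun _ => 1) j).submatrix id t).det, ?_, Or.inr ⟨t, rfl⟩⟩
      rw [← det_cast_sub]
      exact hone
  · intro hphi
    refine ⟨ell K (fun _ => 1), ell_isHomogeneous K _, ?_⟩
    intro j
    by_cases hj0 : j < 0
    · left
      intro x hx _
      rw [comp_neg K S hj0] at hx
      simpa using hx
    · push_neg at hj0
      set d := j.toNat with hd
      have hjd : j = (d : ℤ) := (Int.toNat_of_nonneg hj0).symm
      by_cases hD : Dbound k ≤ d + 1
      · right
        have hempty : IsEmpty (BJ S (d+1)) := isEmpty_BJ S k hk hD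
        have : _root_.comp K (monIdeal K n S) (((d+1 : ℕ)) : ℤ) = ⊥ :=
          comp_empty K S (d+1) hempty
        rw [hjd, show ((d : ℤ) + 1) = (((d+1 : ℕ)) : ℤ) by push_cast; ring, this]
        exact bot_le
      · push_neg at hD
        obtain ⟨dd, hdd, hpsi⟩ := hphi d (by omega)
        rcases hpsi with ⟨s, hs⟩ | ⟨t, ht⟩
        · left
          rw [hjd]
          refine (inj_iff K S (fun _ => 1) d).mpr ?_
          apply injective_of_det (M := Mmat S K (fun _ => 1) d) s
          rw [det_cast_sub, ← hs]
          exact hdd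
        · right
          rw [hjd]
          refine (surj_iff K S (fun _ => 1) d).mpr ?_
          apply surjective_of_det (M := Mmat S K (fun _ => 1) d) t
          rw [det_cast_sub, ← ht]
          exact hdd

end Main

end WlpAux

/-- **Corollary (wlp-0-p).** For an Artinian monomial algebra `A = R/I` (given by the set `S` of
exponent vectors of the monomial generators, containing a power of each variable), the following
are equivalent: (i) `A` has the WLP in characteristic zero; (ii) `A` has the WLP in some positive
characteristic; (iii) `A` has the WLP in every sufficiently large positive characteristic. -/
theorem stmt5 (n : ℕ) (S : Set (Fin n →₀ ℕ))
    (hart : ∀ i : Fin n, ∃ k : ℕ, Finsupp.single i k ∈ S) :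
    List.TFAE
      [ ∀ (K : Type) [Field K] [Infinite K], CharZero K → WLP K (monIdeal K n S),
        ∃ p : ℕ, p.Prime ∧
          ∀ (K : Type) [Field K] [Infinite K], CharP K p → WLP K (monIdeal K n S),
        ∃ B : ℕ, ∀ p : ℕ, p.Prime → B ≤ p →
          ∀ (K : Type) [Field K] [Infinite K], CharP K p → WLP K (monIdeal K n S) ] := by
  classical
  have hk : ∀ i, Finsupp.single i ((fun i => (hart i).choose) i) ∈ S :=
    fun i => (hart i).choose_spec
  set k : Fin n → ℕ := fun i => (hart i).choose with hkdef
  tfae_have 1 → 3 := by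
    intro h1
    have hQ : WlpAux.Phi S ℚ (WlpAux.Dbound k) := (WlpAux.wlp_iff_phi S ℚ k hk).mp (h1 ℚ inferInstance)
    choose F hF using hQ
    refine ⟨(Finset.range (WlpAux.Dbound k)).sup (fun j => if h : j < WlpAux.Dbound k then (F j h).natAbs else 0) + 1,
      fun p hp hBp K _ _ hKp => (WlpAux.wlp_iff_phi S K k hk).mpr ?_⟩
    haveI := hKp
    intro j hj
    refine ⟨F j hj, ?_, (hF j hj).2⟩
    have hne : F j hj ≠ 0 := fun h0 => (hF j hj).1 (by rw [h0, Int.cast_zero])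
    intro hcast0
    rw [CharP.intCast_eq_zero_iff K p] at hcast0
    have hdvd : p ∣ (F j hj).natAbs := by
      have := Int.natAbs_dvd_natAbs.mpr hcast0
      simpa using this
    have hle : p ≤ (F j hj).natAbs :=
      Nat.le_of_dvd (Nat.pos_of_ne_zero (Int.natAbs_ne_zero.mpr hne)) hdvd
    have hsup : (fun j => if h : j < WlpAux.Dbound k then (F j h).natAbs else 0) j
        ≤ (Finset.range (WlpAux.Dbound k)).sup (fun j => if h : j < WlpAux.Dbound k then (F j h).natAbs else 0) :=
      Finset.le_sup (f := fun j => if h : j < WlpAux.Dbound k then (F j h).natAbs else 0)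
        (Finset.mem_range.mpr hj)
    simp only [dif_pos hj] at hsup
    omega
  tfae_have 3 → 2 := by
    rintro ⟨B, hB⟩
    obtain ⟨p, hpB, hp⟩ := Nat.exists_infinite_primes B
    exact ⟨p, hp, fun K _ _ hK => hB p hp hpB K hK⟩
  tfae_have 2 → 1 := by
    rintro ⟨p, hp, h2⟩
    haveI : Fact p.Prime := ⟨hp⟩
    have hphiP := (WlpAux.wlp_iff_phi S (AlgebraicClosure (ZMod p)) k hk).mp
      (h2 (AlgebraicClosure (ZMod p)) inferInstance)
    intro K _ _ hKc
    haveI := hKc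
    refine (WlpAux.wlp_iff_phi S K k hk).mpr (fun j hj => ?_)
    obtain ⟨dd, hdd, hpsi⟩ := hphiP j hj
    exact ⟨dd, Int.cast_ne_zero.mpr (fun h0 => hdd (by rw [h0, Int.cast_zero])), hpsi⟩
  tfae_finish
end

section
/- Let R = K[x,y] be a polynomial ring in two variables over an infinite field K of arbitrary characteristic, and let I be a homogeneous ideal with R/I Artinian. Then R/I has the weak Lefschetz property. -/
open MvPolynomial

lemma aux_eval_smul {K σ : Type*} [Fintype σ] [CommSemiring K] {p : MvPolynomial σ K} {n : ℕ}
    (hp : p.IsHomogeneous n) (c : K) (w : σ → K) :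
    eval (c • w) p = c ^ n * eval w p := by
  rw [eval_eq', eval_eq', Finset.mul_sum]
  apply Finset.sum_congr rfl
  intro d hd
  have hdeg : ∑ i, d i = n := by
    have h1 : d.degree = n := by
      by_contra h
      exact (mem_support_iff.mp hd) (hp.coeff_eq_zero h)
    rw [← h1, Finsupp.degree]
    exact (Finset.sum_subset (Finset.subset_univ _) (by
      intro x _ hx
      simpa using (Finsupp.notMem_support_iff.mp hx))).symm
  calc coeff d p * ∏ i, (c • w) i ^ d i
      = coeff d p * ((∏ i, c ^ d i) * ∏ i, w i ^ d i) := by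
        rw [← Finset.prod_mul_distrib]; simp [mul_pow]
    _ = c ^ n * (coeff d p * ∏ i, w i ^ d i) := by
        rw [Finset.prod_pow_eq_pow_sum, hdeg]; ring

lemma aux_extract {K σ : Type*} [CommRing K] {ℓ r q : MvPolynomial σ K} {t : ℕ}
    (ht : 1 ≤ t) (hl : ℓ.IsHomogeneous 1) (hr : r.IsHomogeneous t) (h : r = ℓ * q) :
    r = ℓ * homogeneousComponent (t - 1) q := by
  have h1 : r = homogeneousComponent t r := by
    rw [homogeneousComponent_of_mem hr, if_pos rfl]
  conv_lhs => rw [h1, h]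
  conv_lhs => rw [← sum_homogeneousComponent q]
  rw [Finset.mul_sum, map_sum]
  have key : ∀ i ∈ Finset.range (q.totalDegree + 1),
      homogeneousComponent t (ℓ * homogeneousComponent i q)
        = if i = t - 1 then ℓ * homogeneousComponent i q else 0 := by
    intro i _
    have hmem : ℓ * homogeneousComponent i q ∈ homogeneousSubmodule σ K (1 + i) :=
      hl.mul (homogeneousComponent_isHomogeneous i q)
    rw [homogeneousComponent_of_mem hmem]
    congr 1
    simp only [eq_iff_iff]
    omega
  rw [Finset.sum_congr rfl key, Finset.sum_ite_eq' (Finset.range (q.totalDegree + 1))]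
  by_cases hc : t - 1 ∈ Finset.range (q.totalDegree + 1)
  · rw [if_pos hc]
  · rw [if_neg hc, homogeneousComponent_eq_zero, mul_zero]
    simp only [Finset.mem_range] at hc
    omega

lemma aux_div_core {K : Type*} [Field K] [Infinite K] (w : Fin 2 → K) (hw1 : w 1 ≠ 0)
    {r : MvPolynomial (Fin 2) K} {t : ℕ} (hr : r.IsHomogeneous t) (h0 : eval w r = 0) :
    ∃ q, r = (C (w 1) * X 0 - C (w 0) * X 1) * q := by
  set a : MvPolynomial (Fin 1) K := C (w 0 / w 1) * X 0 with ha
  set P := finSuccEquiv K 1 r with hP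
  have hroot : Polynomial.eval a P = 0 := by
    apply MvPolynomial.funext
    intro s
    rw [map_zero, hP, eval_polynomial_eval_finSuccEquiv]
    have hpt : (Fin.cases (eval s a) s : Fin 2 → K) = (s 0 / w 1) • w := by
      funext i
      refine Fin.cases ?_ ?_ i
      · simp [ha, div_mul_eq_mul_div, mul_comm]
        ring
      · intro j
        have : j = 0 := Subsingleton.elim j 0
        subst this
        simp only [Fin.cases_succ, Pi.smul_apply, smul_eq_mul]
        field_simp
        rfl
    rw [hpt, aux_eval_smul hr, h0, mul_zero]
  obtain ⟨Q, hQ⟩ := Polynomial.dvd_iff_isRoot.mpr hroot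
  refine ⟨(finSuccEquiv K 1).symm (Polynomial.C (C (w 1)⁻¹) * Q), ?_⟩
  apply (finSuccEquiv K 1).injective
  have hC : ∀ c : K, finSuccEquiv K 1 (C c) = Polynomial.C (C c) := fun c => by
    simp [finSuccEquiv_apply]
  have hX1 : finSuccEquiv K 1 (X 1) = Polynomial.C (X 0) := by
    have : (1 : Fin 2) = Fin.succ 0 := rfl
    rw [this, finSuccEquiv_X_succ]
  have hL : finSuccEquiv K 1 (C (w 1) * X 0 - C (w 0) * X 1)
      = Polynomial.C (C (w 1)) * (Polynomial.X - Polynomial.C a) := by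
    rw [map_sub, map_mul, map_mul, hC, hC, finSuccEquiv_X_zero, hX1, mul_sub, ha]
    rw [sub_right_inj]
    rw [← Polynomial.C_mul, ← Polynomial.C_mul, ← mul_assoc, ← MvPolynomial.C_mul]
    congr 3
    field_simp
  rw [map_mul, AlgEquiv.apply_symm_apply, ← hP, hQ, hL]
  have hunit : Polynomial.C (C (w 1)) * Polynomial.C (C (w 1)⁻¹)
      = (1 : Polynomial (MvPolynomial (Fin 1) K)) := by
    rw [← Polynomial.C_mul, ← MvPolynomial.C_mul, mul_inv_cancel₀ hw1, C_1, Polynomial.C_1]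
  linear_combination (-((Polynomial.X - Polynomial.C a) * Q)) * hunit

lemma aux_div {K : Type*} [Field K] [Infinite K] (w : Fin 2 → K) (hw : w 0 ≠ 0 ∨ w 1 ≠ 0)
    {r : MvPolynomial (Fin 2) K} {t : ℕ} (hr : r.IsHomogeneous t) (h0 : eval w r = 0) :
    ∃ q, r = (C (w 1) * X 0 - C (w 0) * X 1) * q := by
  rcases hw with hw0 | hw1
  swap
  · exact aux_div_core w hw1 hr h0
  · by_cases hw1 : w 1 ≠ 0
    · exact aux_div_core w hw1 hr h0
    push_neg at hw1
    set e : Fin 2 ≃ Fin 2 := Equiv.swap 0 1 with he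
    set w' : Fin 2 → K := w ∘ e with hw'
    have hw'1 : w' 1 ≠ 0 := by simpa [hw', he, Equiv.swap_apply_right] using hw0
    have hr' : (rename e r).IsHomogeneous t := hr.rename_isHomogeneous
    have h0' : eval w' (rename e r) = 0 := by
      rw [eval_rename]
      have : (w' ∘ e) = w := by
        funext i
        simp [hw', he, Function.comp, Equiv.swap_apply_self]
      rwa [this]
    obtain ⟨q', hq'⟩ := aux_div_core w' hw'1 hr' h0'
    have hback : rename (⇑e) (rename (⇑e) r) = r := by
      rw [rename_rename]
      have : (⇑e ∘ ⇑e) = id := by funext i; simp [he, Equiv.swap_apply_self]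
      rw [this, rename_id]
      rfl
    refine ⟨-(rename e q'), ?_⟩
    calc r = rename e (rename e r) := hback.symm
      _ = rename e ((C (w' 1) * X 0 - C (w' 0) * X 1) * q') := by rw [hq']
      _ = (C (w 1) * X 0 - C (w 0) * X 1) * -(rename e q') := by
          rw [map_mul, map_sub, map_mul, map_mul, rename_C, rename_C, rename_X, rename_X]
          simp only [he, Equiv.swap_apply_left, Equiv.swap_apply_right, hw',
            Function.comp_apply]
          ring

lemma aux_exists {K : Type*} [Field K] (I : Ideal (MvPolynomial (Fin 2) K))
    (hhom : ∀ p ∈ I, ∀ j : ℕ, MvPolynomial.homogeneousComponent j p ∈ I)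
    (hArt : Module.Finite K (MvPolynomial (Fin 2) K ⧸ I)) :
    ∃ n : ℕ, ∃ g, g ∈ I ∧ g ≠ 0 ∧ g.IsHomogeneous n := by
  have hni : ¬ LinearIndependent K
      (fun n : ℕ => (Ideal.Quotient.mkₐ K I (X 0 ^ n) : MvPolynomial (Fin 2) K ⧸ I)) :=
    Module.Finite.not_linearIndependent_of_infinite _
  rw [linearIndependent_iff'] at hni
  push_neg at hni
  obtain ⟨s, c, hsum, i, his, hci⟩ := hni
  set p : MvPolynomial (Fin 2) K := ∑ n ∈ s, c n • (X 0 ^ n) with hp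
  have hpI : p ∈ I := by
    rw [← Ideal.Quotient.eq_zero_iff_mem]
    have : Ideal.Quotient.mk I p = Ideal.Quotient.mkₐ K I p := rfl
    rw [this, hp, map_sum]
    simpa using hsum
  have hterm : ∀ n : ℕ, c n • (X 0 ^ n : MvPolynomial (Fin 2) K)
      ∈ homogeneousSubmodule (Fin 2) K n := fun n =>
    Submodule.smul_mem _ _ (isHomogeneous_X_pow (0 : Fin 2) n)
  have hcomp : homogeneousComponent i p = c i • (X 0 ^ i) := by
    rw [hp, map_sum]
    have : ∀ n ∈ s, homogeneousComponent i (c n • (X 0 ^ n : MvPolynomial (Fin 2) K))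
        = if n = i then c n • (X 0 ^ n : MvPolynomial (Fin 2) K) else 0 := by
      intro n _
      rw [homogeneousComponent_of_mem (hterm n)]
      by_cases hni : n = i
      · subst hni; simp
      · rw [if_neg (fun h => hni h.symm), if_neg hni]
    rw [Finset.sum_congr rfl this, Finset.sum_ite_eq' s, if_pos his]
  refine ⟨i, homogeneousComponent i p, hhom p hpI i, ?_, ?_⟩
  · rw [hcomp]
    exact smul_ne_zero hci (pow_ne_zero _ (MvPolynomial.X_ne_zero _))
  · rw [hcomp]
    exact hterm i

/-- **Proposition (2-wlp).** Over an infinite field `K` of arbitrary characteristic, every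
Artinian graded quotient `K[x,y]/I` has the weak Lefschetz property. -/
theorem stmt6 {K : Type*} [Field K] [Infinite K] (I : Ideal (MvPolynomial (Fin 2) K))
    (hhom : ∀ p ∈ I, ∀ j : ℕ, MvPolynomial.homogeneousComponent j p ∈ I)
    (hArt : Module.Finite K (MvPolynomial (Fin 2) K ⧸ I)) :
    WLP K I := by
  classical
  have hex : ∃ n : ℕ, ∃ g, g ∈ I ∧ g ≠ 0 ∧ g.IsHomogeneous n := aux_exists I hhom hArt
  obtain ⟨g, hgI, hg0, hgh⟩ := Nat.find_spec hex
  have hmin : ∀ f ∈ I, ∀ m, m < Nat.find hex → f.IsHomogeneous m → f = 0 := by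
    intro f hf m hm hfm
    by_contra h
    exact Nat.find_min hex hm ⟨f, hf, h, hfm⟩
  set α := Nat.find hex with hαdef
  by_cases hα : α = 0
  · -- the quotient ring is trivial
    have hgh0 : g.IsHomogeneous 0 := by rwa [hα] at hgh
    obtain ⟨c, hgC⟩ : ∃ c, g = C c := by
      refine ⟨coeff 0 g, ?_⟩
      have h1 : homogeneousComponent 0 g = g := by
        rw [homogeneousComponent_of_mem hgh0, if_pos rfl]
      conv_lhs => rw [← h1]
      exact homogeneousComponent_zero (σ := Fin 2) (R := K) (φ := g)
    have hc0 : c ≠ 0 := by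
      intro h
      apply hg0
      rw [hgC, h, C_0]
    have honeI : (1 : MvPolynomial (Fin 2) K) ∈ I := by
      have hmem : C c⁻¹ * g ∈ I := Ideal.mul_mem_left I _ hgI
      rwa [hgC, ← C_mul, inv_mul_cancel₀ hc0, C_1] at hmem
    refine ⟨X 0, isHomogeneous_X K 0, fun j => Or.inl ?_⟩
    intro x _ _
    have hone : (1 : MvPolynomial (Fin 2) K ⧸ I) = 0 := by
      rw [← map_one (Ideal.Quotient.mk I), Ideal.Quotient.eq_zero_iff_mem]
      exact honeI
    calc x = x * 1 := (mul_one x).symm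
      _ = 0 := by rw [hone, mul_zero]
  · -- main case
    have hα1 : 1 ≤ α := Nat.one_le_iff_ne_zero.mpr hα
    obtain ⟨w, hwg⟩ : ∃ w : Fin 2 → K, eval w g ≠ 0 := by
      by_contra h
      push_neg at h
      exact hg0 (hgh.eq_zero_of_forall_eval_eq_zero h)
    have hw : w 0 ≠ 0 ∨ w 1 ≠ 0 := by
      by_contra h
      push_neg at h
      apply hwg
      have hw0 : w = (0 : K) • w := by
        funext i
        fin_cases i <;> simp [h.1, h.2]
      rw [hw0, aux_eval_smul hgh, zero_pow hα, zero_mul]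
    set ℓ : MvPolynomial (Fin 2) K := C (w 1) * X 0 - C (w 0) * X 1 with hℓdef
    have hℓhom : ℓ.IsHomogeneous 1 :=
      ((isHomogeneous_X K 0).C_mul _).sub ((isHomogeneous_X K 1).C_mul _)
    have hℓ0 : ℓ ≠ 0 := by
      intro h
      have e1 : eval ![(1:K),0] ℓ = w 1 := by simp [hℓdef]
      have e2 : eval ![(0:K),1] ℓ = -(w 0) := by simp [hℓdef]
      rw [h, map_zero] at e1 e2
      rcases hw with h0 | h1
      · exact h0 (neg_eq_zero.mp e2.symm)
      · exact h1 e1.symm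
    obtain ⟨lam, hlamhom, hlamw⟩ : ∃ lam : MvPolynomial (Fin 2) K,
        lam.IsHomogeneous 1 ∧ eval w lam = 1 := by
      rcases hw with h0 | h1
      · exact ⟨C (w 0)⁻¹ * X 0, (isHomogeneous_X K 0).C_mul _, by
          simp [inv_mul_cancel₀ h0]⟩
      · exact ⟨C (w 1)⁻¹ * X 1, (isHomogeneous_X K 1).C_mul _, by
          simp [inv_mul_cancel₀ h1]⟩
    set e := eval w g with he
    -- surjectivity helper
    have hsurj : ∀ t : ℕ, α ≤ t → ∀ h : MvPolynomial (Fin 2) K, h.IsHomogeneous t →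
        ∃ q : MvPolynomial (Fin 2) K, q.IsHomogeneous (t - 1) ∧ h - ℓ * q ∈ I := by
      intro t hαt h hh
      set cc := eval w h with hcc
      set p : MvPolynomial (Fin 2) K := lam ^ (t - α) * g with hpdef
      have hpI : p ∈ I := Ideal.mul_mem_left I _ hgI
      have hph : p.IsHomogeneous t := by
        have := (hlamhom.pow (t - α)).mul hgh
        rw [one_mul] at this
        rwa [Nat.sub_add_cancel hαt] at this
      have hpe : eval w p = e := by
        rw [hpdef, map_mul, map_pow, hlamw, one_pow, one_mul]
      set r : MvPolynomial (Fin 2) K := C e * h - C cc * p with hrdef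
      have hrh : r.IsHomogeneous t := (hh.C_mul e).sub (hph.C_mul cc)
      have hre : eval w r = 0 := by
        rw [hrdef, map_sub, map_mul, map_mul, eval_C, eval_C, hpe, hcc]
        ring
      obtain ⟨q0, hq0⟩ := aux_div w hw hrh hre
      have ht1 : 1 ≤ t := le_trans hα1 hαt
      have hq1' : r = ℓ * homogeneousComponent (t - 1) q0 := aux_extract ht1 hℓhom hrh hq0
      set q1 := homogeneousComponent (t - 1) q0 with hq1def
      have hq1hom : q1.IsHomogeneous (t - 1) := homogeneousComponent_isHomogeneous (t - 1) q0
      have he0 : e ≠ 0 := hwg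
      have hee : C e * C e⁻¹ = (1 : MvPolynomial (Fin 2) K) := by
        rw [← C_mul, mul_inv_cancel₀ he0, C_1]
      have hq2 : C e * h - C cc * p = ℓ * q1 := by rw [← hrdef, hq1']
      refine ⟨C e⁻¹ * q1, hq1hom.C_mul _, ?_⟩
      have key : h - ℓ * (C e⁻¹ * q1) = C e⁻¹ * C cc * p := by
        linear_combination (C e⁻¹ : MvPolynomial (Fin 2) K) * hq2 - h * hee
      rw [key, mul_assoc]
      exact Ideal.mul_mem_left I _ (Ideal.mul_mem_left I _ hpI)
    -- conclusion
    refine ⟨ℓ, hℓhom, fun j => ?_⟩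
    by_cases hj : 0 ≤ j
    · by_cases hlt : j.toNat + 1 < α
      · left
        intro x hx hx0
        rw [comp, if_pos hj] at hx
        obtain ⟨f, hf, rfl⟩ := hx
        have hf' : f.IsHomogeneous j.toNat := hf
        have hmul : Ideal.Quotient.mk I (ℓ * f) = 0 := by
          rw [map_mul]
          exact hx0
        have hlfI : ℓ * f ∈ I := Ideal.Quotient.eq_zero_iff_mem.mp hmul
        have hlfhom : (ℓ * f).IsHomogeneous (j.toNat + 1) := by
          have := hℓhom.mul hf'
          rwa [add_comm] at this
        have hzero : ℓ * f = 0 := hmin _ hlfI _ hlt hlfhom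
        rcases mul_eq_zero.mp hzero with h | h
        · exact absurd h hℓ0
        · simp [h]
      · right
        push_neg at hlt
        intro x hx
        rw [comp, if_pos (by omega : (0:ℤ) ≤ j + 1)] at hx
        obtain ⟨h, hh, rfl⟩ := hx
        have htn : (j + 1).toNat = j.toNat + 1 := by omega
        have hh' : h.IsHomogeneous (j.toNat + 1) := by
          have : h ∈ homogeneousSubmodule (Fin 2) K ((j+1).toNat) := hh
          rwa [htn] at this
        obtain ⟨q, hqhom, hqI⟩ := hsurj (j.toNat + 1) hlt h hh'
        have hq' : q.IsHomogeneous j.toNat := by simpa using hqhom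
        refine Submodule.mem_map.mpr ⟨Ideal.Quotient.mkₐ K I q, ?_, ?_⟩
        · rw [comp, if_pos hj]
          exact Submodule.mem_map.mpr ⟨q, hq', rfl⟩
        · show Ideal.Quotient.mk I ℓ * (Ideal.Quotient.mkₐ K I q) = _
          have hmk : Ideal.Quotient.mk I (h - ℓ * q) = 0 :=
            Ideal.Quotient.eq_zero_iff_mem.mpr hqI
          rw [map_sub, sub_eq_zero, map_mul] at hmk
          exact hmk.symm
    · left
      intro x hx _
      rw [comp, if_neg hj] at hx
      simpa using hx
end

section
/- Let p, q, r, m, n be nonnegative integers with 1 ≤ m ≤ n, and let M be the n×n matrix with entries M_{i,j} = C(p, q+j-i) for 1 ≤ j ≤ m and M_{i,j} = C(p, q+r+j-i) for m+1 ≤ j ≤ n. Then det M = Mac(m,q,r) · Mac(n-m, p-q-r, r) · [H(q+r)H(p-q)H(n+r)H(n+p)] / [H(n+p-q)H(n+q+r)H(p)H(r)], where H(n) = ∏_{i=0}^{n-1} i! is the hyperfactorial and Mac(a,b,c) = H(a)H(b)H(c)H(a+b+c)/(H(a+b)H(a+c)H(b+c)). -/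
/-- The hyperfactorial `H(n) = ∏_{i=0}^{n-1} i!`. -/
def hyperfac (n : ℕ) : ℕ := ∏ i ∈ Finset.range n, Nat.factorial i

/-- MacMahon's box formula `Mac(a,b,c) = H(a)H(b)H(c)H(a+b+c)/(H(a+b)H(a+c)H(b+c))`. -/
def MacQ (a b c : ℕ) : ℚ :=
  (hyperfac a * hyperfac b * hyperfac c * hyperfac (a + b + c) : ℚ) /
    (hyperfac (a + b) * hyperfac (a + c) * hyperfac (b + c))

/-- Binomial coefficient `C(p,k)` for an integer `k`, taken to be `0` when `k < 0` (or `k > p`). -/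
def chooseZ (p : ℕ) (k : ℤ) : ℕ := if 0 ≤ k then p.choose k.toNat else 0

open Finset Polynomial Nat

lemma fact_mul_prod (b k : ℕ) : (b !) * ∏ t ∈ range k, (b + 1 + t) = ((b+k) !) := by
  induction k with
  | zero => simp
  | succ k ih => rw [prod_range_succ, ← mul_assoc, ih, ← Nat.add_assoc, Nat.factorial_succ]; ring

lemma fact_mul_prod_q (b k : ℕ) :
    ((b !) : ℚ) * ∏ t ∈ range k, ((b : ℚ) + 1 + t) = (((b+k) !) : ℚ) := by
  rw [← fact_mul_prod b k]; push_cast; ring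

lemma hyperfac_add (b k : ℕ) : hyperfac (b + k) = hyperfac b * ∏ t ∈ range k, ((b+t) !) := by
  induction k with
  | zero => simp
  | succ k ih => rw [← Nat.add_assoc, hyperfac, prod_range_succ, ← hyperfac, ih, prod_range_succ,
      mul_assoc]

lemma hyperfac_ne_zero (k : ℕ) : (hyperfac k : ℚ) ≠ 0 := by
  have : 0 < hyperfac k := Finset.prod_pos fun i _ => Nat.factorial_pos i
  exact_mod_cast this.ne'

lemma prod_range_id_fact (k : ℕ) : ∏ t ∈ range k, (t + 1) = (k !) := by
  induction k with
  | zero => simp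
  | succ k ih => rw [prod_range_succ, ih, Nat.factorial_succ]; ring

lemma prod_Ioi_fin {n : ℕ} (f : ℕ → ℕ → ℚ) :
    (∏ i : Fin n, ∏ j ∈ Finset.Ioi i, f i j) = ∏ i ∈ range n, ∏ j ∈ Ico (i + 1) n, f i j := by
  rw [← Fin.prod_univ_eq_prod_range]
  refine Finset.prod_congr rfl fun i _ => ?_
  have h1 : Finset.Ico ((i : ℕ) + 1) n = Finset.Ioo (i : ℕ) n := by
    ext x; simp only [Finset.mem_Ico, Finset.mem_Ioo]; omega
  rw [h1, ← Fin.map_valEmbedding_Ioi, Finset.prod_map]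
  rfl

noncomputable def gpoly (n p : ℕ) (j : ℕ) : Polynomial ℚ :=
  (∏ k ∈ range j, (X - C ((k : ℚ) + 1))) *
    ∏ t ∈ range (n - 1 - j), (C ((p : ℚ) + j + 2 + t) - X)

lemma gpoly_eval (n p : ℕ) (j : ℕ) (x : ℚ) :
    (gpoly n p j).eval x =
      (∏ k ∈ range j, (x - ((k : ℚ) + 1))) *
        ∏ t ∈ range (n - 1 - j), ((p : ℚ) + j + 2 + t - x) := by
  simp [gpoly, Polynomial.eval_prod]

lemma entry_key (n p : ℕ) (j : ℕ) (hj : j < n) (a : ℕ) (ha1 : 1 ≤ a) (ha2 : a ≤ p + n) :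
    (chooseZ p ((a : ℤ) - ((j : ℤ) + 1)) : ℚ) * (((a - 1)!) * ((p + n - a)!)) =
      (p ! : ℚ) * (gpoly n p j).eval (a : ℚ) := by
  rw [gpoly_eval]
  rcases Nat.lt_or_ge a (j + 1) with hA | hB
  · -- a ≤ j : both sides zero
    have hz : chooseZ p ((a : ℤ) - ((j : ℤ) + 1)) = 0 := by
      rw [chooseZ, if_neg]; push_cast; omega
    have hp0 : (∏ k ∈ range j, ((a : ℚ) - ((k : ℚ) + 1))) = 0 := by
      refine Finset.prod_eq_zero (Finset.mem_range.mpr (show a - 1 < j by omega)) ?_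
      have h1 : ((a - 1 : ℕ) : ℚ) = (a : ℚ) - 1 := by
        rw [Nat.cast_sub ha1]; push_cast; ring
      rw [h1]; ring
    rw [hz, hp0]; push_cast; ring
  · rcases Nat.lt_or_ge (p + j + 1) a with hC | hD
    · -- a ≥ p + j + 2 : both sides zero
      have hz : chooseZ p ((a : ℤ) - ((j : ℤ) + 1)) = 0 := by
        rw [chooseZ, if_pos (by push_cast; omega)]
        apply Nat.choose_eq_zero_of_lt
        have : ((a : ℤ) - ((j : ℤ) + 1)).toNat = a - (j + 1) := by omega
        omega
      have hp0 : (∏ t ∈ range (n - 1 - j), ((p : ℚ) + j + 2 + t - a)) = 0 := by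
        refine Finset.prod_eq_zero (Finset.mem_range.mpr
          (show a - p - j - 2 < n - 1 - j by omega)) ?_
        have h1 : ((a - p - j - 2 : ℕ) : ℚ) = (a : ℚ) - (p : ℚ) - (j : ℚ) - 2 := by
          have h2 : a - p - j - 2 = a - (p + j + 2) := by omega
          rw [h2, Nat.cast_sub (by omega)]; push_cast; ring
        rw [h1]; ring
      rw [hz, hp0]; push_cast; ring
    · -- main case : j + 1 ≤ a ≤ p + j + 1
      have hz : chooseZ p ((a : ℤ) - ((j : ℤ) + 1)) = p.choose (a - j - 1) := by
        rw [chooseZ, if_pos (by push_cast; omega)]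
        congr 1
        omega
      -- first product
      have c1 : (∏ k ∈ range j, ((a : ℚ) - ((k : ℚ) + 1))) =
          ((∏ k ∈ range j, (a - 1 - k) : ℕ) : ℚ) := by
        rw [Nat.cast_prod]
        refine Finset.prod_congr rfl fun k hk => ?_
        have hk' : k < j := Finset.mem_range.mp hk
        have h2 : a - 1 - k = a - (k + 1) := by omega
        rw [h2, Nat.cast_sub (by omega)]; push_cast; ring
      have e1 : (∏ k ∈ range j, (a - 1 - k)) * ((a - j - 1)!) = ((a - 1)!) := by
        have hr : (∏ k ∈ range j, (a - 1 - k)) = ∏ k ∈ range j, (a - j - 1 + 1 + k) := by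
          rw [← Finset.prod_range_reflect]
          refine Finset.prod_congr rfl fun k hk => ?_
          have hk' : k < j := Finset.mem_range.mp hk
          omega
        rw [hr, mul_comm, fact_mul_prod]
        congr 1
        omega
      -- second product
      have c2 : (∏ t ∈ range (n - 1 - j), ((p : ℚ) + j + 2 + t - a)) =
          ((∏ t ∈ range (n - 1 - j), (p + j + 1 - a + 1 + t) : ℕ) : ℚ) := by
        rw [Nat.cast_prod]
        refine Finset.prod_congr rfl fun t _ => ?_
        have h2 : p + j + 1 - a + 1 + t = p + j + 2 + t - a := by omega
        rw [h2, Nat.cast_sub (by omega)]; push_cast; ring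
      have e2 : ((p + j + 1 - a)!) * (∏ t ∈ range (n - 1 - j), (p + j + 1 - a + 1 + t)) =
          ((p + n - a)!) := by
        rw [fact_mul_prod]
        congr 1
        omega
      have e3 : p.choose (a - j - 1) * ((a - j - 1)!) * ((p + j + 1 - a)!) = p ! := by
        have h4 : p - (a - j - 1) = p + j + 1 - a := by omega
        rw [← h4]
        exact Nat.choose_mul_factorial_mul_factorial (by omega)
      rw [hz, c1, c2]
      have e1q : ((∏ k ∈ range j, (a - 1 - k) : ℕ) : ℚ) * (((a - j - 1)!) : ℚ) =
          (((a - 1)!) : ℚ) := by exact_mod_cast congrArg (Nat.cast : ℕ → ℚ) e1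
      have e2q : ((((p + j + 1 - a)!) : ℕ) : ℚ) *
          ((∏ t ∈ range (n - 1 - j), (p + j + 1 - a + 1 + t) : ℕ) : ℚ) =
          (((p + n - a)!) : ℚ) := by exact_mod_cast congrArg (Nat.cast : ℕ → ℚ) e2
      have e3q : (p.choose (a - j - 1) : ℚ) * (((a - j - 1)!) : ℚ) * ((((p + j + 1 - a)!)) : ℚ) =
          ((p !) : ℚ) := by exact_mod_cast congrArg (Nat.cast : ℕ → ℚ) e3
      calc (p.choose (a - j - 1) : ℚ) * ((((a - 1)!) : ℚ) * (((p + n - a)!) : ℚ))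
          = (p.choose (a - j - 1) : ℚ) *
            (((∏ k ∈ range j, (a - 1 - k) : ℕ) : ℚ) * (((a - j - 1)!) : ℚ) *
              (((((p + j + 1 - a)!)) : ℚ) *
                ((∏ t ∈ range (n - 1 - j), (p + j + 1 - a + 1 + t) : ℕ) : ℚ))) := by
            rw [e1q, e2q]
        _ = ((p.choose (a - j - 1) : ℚ) * (((a - j - 1)!) : ℚ) * ((((p + j + 1 - a)!)) : ℚ)) *
            (((∏ k ∈ range j, (a - 1 - k) : ℕ) : ℚ) *
              ((∏ t ∈ range (n - 1 - j), (p + j + 1 - a + 1 + t) : ℕ) : ℚ)) := by ring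
        _ = _ := by rw [e3q]

lemma gpoly_natDegree_lt (n p : ℕ) (j : ℕ) (hj : j < n) : (gpoly n p j).natDegree < n := by
  have h1 : (∏ k ∈ range j, (X - C ((k : ℚ) + 1))).natDegree ≤ j := by
    have hb : ∀ k ∈ range j, (X - C ((k : ℚ) + 1)).natDegree ≤ 1 := by
      intro k _
      exact le_of_eq (Polynomial.natDegree_X_sub_C _)
    exact le_trans (Polynomial.natDegree_prod_le _ _)
      (le_trans (Finset.sum_le_sum hb) (by simp))
  have h2 : (∏ t ∈ range (n - 1 - j), (C ((p : ℚ) + j + 2 + t) - X)).natDegree ≤ n - 1 - j := by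
    have hb : ∀ t ∈ range (n - 1 - j), (C ((p : ℚ) + j + 2 + t) - X).natDegree ≤ 1 := by
      intro t _
      refine le_trans (Polynomial.natDegree_sub_le _ _) (max_le ?_ ?_)
      · exact le_trans (le_of_eq (Polynomial.natDegree_C _)) (by norm_num)
      · exact le_of_eq Polynomial.natDegree_X
    exact le_trans (Polynomial.natDegree_prod_le _ _)
      (le_trans (Finset.sum_le_sum hb) (by simp))
  have := Polynomial.natDegree_mul_le (p := ∏ k ∈ range j, (X - C ((k : ℚ) + 1)))
    (q := ∏ t ∈ range (n - 1 - j), (C ((p : ℚ) + j + 2 + t) - X))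
  rw [gpoly]
  omega

noncomputable def Tmat (n p : ℕ) : Matrix (Fin n) (Fin n) ℚ :=
  Matrix.of fun i j : Fin n => (gpoly n p (j : ℕ)).coeff (i : ℕ)

lemma evalMatrix (n p : ℕ) (v : Fin n → ℚ) :
    Matrix.of (fun i j : Fin n => (gpoly n p (j : ℕ)).eval (v i)) =
      Matrix.vandermonde v * Tmat n p := by
  ext i j
  rw [Matrix.mul_apply, Matrix.of_apply, Polynomial.eval_eq_sum]
  simp only [eq_ratCast, Rat.cast_id, Matrix.vandermonde]
  have hsupp : (gpoly n p (j : ℕ)).support ⊆ range n :=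
    Polynomial.supp_subset_range (gpoly_natDegree_lt n p j j.2)
  rw [Polynomial.sum_eq_of_subset _ (fun k => zero_mul ((v i) ^ k)) hsupp,
    ← Fin.sum_univ_eq_sum_range]
  congr
  ext k
  rw [mul_comm]
  rfl

lemma det_evalMatrix (n p : ℕ) (v : Fin n → ℚ) :
    Matrix.det (Matrix.of (fun i j : Fin n => (gpoly n p (j : ℕ)).eval (v i))) =
      Matrix.det (Matrix.vandermonde v) * Matrix.det (Tmat n p) := by
  rw [evalMatrix, Matrix.det_mul]

lemma det_N0 (n p : ℕ) :
    Matrix.det (Matrix.of (fun i j : Fin n => (gpoly n p (j : ℕ)).eval ((i : ℚ) + 1))) =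
      ∏ i ∈ range n, (((i !) : ℚ) * ∏ t ∈ range (n - 1 - i), ((p : ℚ) + 1 + t)) := by
  have htri : Matrix.BlockTriangular
      (Matrix.of (fun i j : Fin n => (gpoly n p (j : ℕ)).eval ((i : ℚ) + 1)))
      OrderDual.toDual := by
    intro i j hij
    have hij' : (i : ℕ) < (j : ℕ) := hij
    rw [Matrix.of_apply, gpoly_eval]
    have h0 : (∏ k ∈ range (j : ℕ), ((i : ℚ) + 1 - ((k : ℚ) + 1))) = 0 :=
      Finset.prod_eq_zero (Finset.mem_range.mpr hij') (by ring)
    rw [h0, zero_mul]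
  rw [Matrix.det_of_lowerTriangular _ htri, ← Fin.prod_univ_eq_prod_range
    (fun i => (((i !) : ℚ) * ∏ t ∈ range (n - 1 - i), ((p : ℚ) + 1 + t)))]
  refine Finset.prod_congr rfl fun i _ => ?_
  rw [Matrix.of_apply, gpoly_eval]
  have h1 : (∏ k ∈ range (i : ℕ), ((i : ℚ) + 1 - ((k : ℚ) + 1))) = (((i : ℕ)!) : ℚ) := by
    have c1 : (∏ k ∈ range (i : ℕ), ((i : ℚ) + 1 - ((k : ℚ) + 1))) =
        ((∏ k ∈ range (i : ℕ), ((i : ℕ) - k) : ℕ) : ℚ) := by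
      rw [Nat.cast_prod]
      refine Finset.prod_congr rfl fun k hk => ?_
      have : k < (i : ℕ) := Finset.mem_range.mp hk
      rw [Nat.cast_sub (by omega)]; ring
    rw [c1]
    congr 1
    rw [← Finset.prod_range_reflect]
    rw [← prod_range_id_fact (i : ℕ)]
    refine Finset.prod_congr rfl fun k hk => ?_
    have : k < (i : ℕ) := Finset.mem_range.mp hk
    omega
  rw [h1]
  congr 1
  refine Finset.prod_congr rfl fun t _ => ?_
  ring

lemma fact_ne_zero_q (k : ℕ) : ((k ! : ℕ) : ℚ) ≠ 0 := by
  exact_mod_cast (Nat.factorial_pos k).ne'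

lemma prodq (b k : ℕ) : ∏ t ∈ range k, ((b : ℚ) + 1 + t) = (((b + k)!) : ℚ) / ((b !) : ℚ) := by
  rw [eq_div_iff (fact_ne_zero_q b), mul_comm, fact_mul_prod_q]

lemma hq (b k : ℕ) :
    ∏ t ∈ range k, ((((b + t)!) : ℕ) : ℚ) = (hyperfac (b + k) : ℚ) / (hyperfac b : ℚ) := by
  rw [eq_div_iff (hyperfac_ne_zero b), mul_comm, ← Nat.cast_prod, ← Nat.cast_mul,
    ← hyperfac_add]

lemma W1inner (n i : ℕ) (h : i < n) :
    ∏ j ∈ Ico (i + 1) n, ((j : ℚ) - (i : ℚ)) = ((((n - 1 - i)!) : ℕ) : ℚ) := by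
  rw [Finset.prod_Ico_eq_prod_range]
  have h1 : n - (i + 1) = n - 1 - i := by omega
  rw [h1, ← prod_range_id_fact, Nat.cast_prod]
  refine Finset.prod_congr rfl fun t _ => ?_
  push_cast
  ring

lemma W1full (n : ℕ) :
    ∏ i ∈ range n, ∏ j ∈ Ico (i + 1) n, ((j : ℚ) - (i : ℚ)) = (hyperfac n : ℚ) := by
  rw [Finset.prod_congr rfl fun i hi => W1inner n i (Finset.mem_range.mp hi), ← Nat.cast_prod]
  congr 1
  rw [hyperfac]
  exact Finset.prod_range_reflect (fun i => (i !)) n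


lemma W2full (n : ℕ) : ∏ i ∈ range n, ((((n - 1 - i)!) : ℕ) : ℚ) = (hyperfac n : ℚ) := by
  rw [← Nat.cast_prod]
  congr 1
  rw [hyperfac]
  exact Finset.prod_range_reflect (fun i => (i !)) n

lemma det_vand_range (n : ℕ) (f : ℕ → ℚ) :
    Matrix.det (Matrix.vandermonde fun i : Fin n => f (i : ℕ)) =
      ∏ i ∈ range n, ∏ j ∈ Ico (i + 1) n, (f j - f i) := by
  rw [Matrix.det_vandermonde, ← prod_Ioi_fin (fun a b => f b - f a)]


lemma final_identity {P Hq Hqm Hrusm Hrus Hqrms Hqrm Hus Hu Hm Hrsm Hrs Hrm Hr Hs Hms Hqrums Hqru Hqr Hru : ℚ}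
    {m s : ℕ}
    (h1 : Hq ≠ 0) (h2 : Hqm ≠ 0) (h3 : Hrusm ≠ 0) (h4 : Hrus ≠ 0) (h5 : Hqrms ≠ 0)
    (h6 : Hqrm ≠ 0) (h7 : Hus ≠ 0) (h8 : Hu ≠ 0) (h9 : Hm ≠ 0) (h10 : Hrsm ≠ 0)
    (h11 : Hrs ≠ 0) (h12 : Hrm ≠ 0) (h13 : Hr ≠ 0) (h14 : Hs ≠ 0) (h15 : Hms ≠ 0)
    (h16 : Hqrums ≠ 0) (h17 : Hqru ≠ 0) (h18 : Hqr ≠ 0) (h19 : Hru ≠ 0) (hP : P ≠ 0) :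
    P ^ m / (Hqm / Hq * (Hrusm / Hrus)) * (P ^ s / (Hqrms / Hqrm * (Hus / Hu))) *
      (Hm * (Hrsm / Hrs) / (Hrm / Hr) * Hs * (Hms * (Hqrums / Hqru) / P ^ (m + s) / Hms)) =
      Hm * Hq * Hr * Hqrm / (Hqm * Hrm * Hqr) * (Hs * Hu * Hr * Hrus / (Hus * Hrs * Hru)) *
        (Hqr * Hru * Hrsm * Hqrums / (Hrusm * Hqrms * Hqru * Hr)) := by
  rw [pow_add]
  field_simp

set_option maxHeartbeats 3000000 in
/-- **Lemma (split-binom-det).** For nonnegative integers `p, q, r, m, n` with `1 ≤ m ≤ n`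
(and `q + r ≤ p`, needed for all terms of the formula to be defined), the `n×n` matrix `M` with
entries `M_{i,j} = C(p, q+j-i)` for `1 ≤ j ≤ m` and `M_{i,j} = C(p, q+r+j-i)` for `m+1 ≤ j ≤ n`
has determinant
`Mac(m,q,r)·Mac(n-m, p-q-r, r)·H(q+r)H(p-q)H(n+r)H(n+p)/(H(n+p-q)H(n+q+r)H(p)H(r))`. -/
theorem stmt10 (p q r m n : ℕ) (hm : 1 ≤ m) (hmn : m ≤ n) (hqrp : q + r ≤ p) :
    Matrix.det (Matrix.of fun i j : Fin n =>
        if (j : ℕ) < m then (chooseZ p ((q : ℤ) + (j : ℕ) - (i : ℕ)) : ℚ)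
        else (chooseZ p ((q : ℤ) + r + (j : ℕ) - (i : ℕ)) : ℚ)) =
      MacQ m q r * MacQ (n - m) (p - q - r) r *
        ((hyperfac (q + r) * hyperfac (p - q) * hyperfac (n + r) * hyperfac (n + p) : ℚ) /
          (hyperfac (n + p - q) * hyperfac (n + q + r) * hyperfac p * hyperfac r)) := by
  obtain ⟨s, rfl⟩ : ∃ s, n = m + s := ⟨n - m, by omega⟩
  obtain ⟨u, rfl⟩ : ∃ u, p = q + r + u := ⟨p - q - r, by omega⟩
  set va : ℕ → ℕ := fun j => if j < m then q + j + 1 else q + r + j + 1 with hva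
  set cfun : ℕ → ℚ := fun i =>
    (((q + r + u)! : ℕ) : ℚ) /
      ((((va i - 1)! : ℕ) : ℚ) * ((((q + r + u) + (m + s) - va i)! : ℕ) : ℚ)) with hcfun
  have hM : (Matrix.of fun i j : Fin (m + s) =>
      if (j : ℕ) < m then (chooseZ (q + r + u) ((q : ℤ) + (j : ℕ) - (i : ℕ)) : ℚ)
      else (chooseZ (q + r + u) ((q : ℤ) + r + (j : ℕ) - (i : ℕ)) : ℚ)) =
      (Matrix.diagonal (fun i : Fin (m + s) => cfun (i : ℕ)) *
        Matrix.of (fun i j : Fin (m + s) =>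
          (gpoly (m + s) (q + r + u) (j : ℕ)).eval ((va (i : ℕ) : ℚ)))).transpose := by
    ext i j
    rw [Matrix.transpose_apply, Matrix.diagonal_mul, Matrix.of_apply, Matrix.of_apply]
    have hva1 : 1 ≤ va (j : ℕ) := by by_cases h : (j : ℕ) < m <;> simp [hva, h]
    have hva2 : va (j : ℕ) ≤ (q + r + u) + (m + s) := by
      have := j.2
      by_cases h : (j : ℕ) < m <;> simp [hva, h] <;> omega
    have hek := entry_key (m + s) (q + r + u) (i : ℕ) i.2 (va (j : ℕ)) hva1 hva2
    have hDne : ((((va (j : ℕ) - 1)! : ℕ) : ℚ) *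
        ((((q + r + u) + (m + s) - va (j : ℕ))! : ℕ) : ℚ)) ≠ 0 :=
      mul_ne_zero (fact_ne_zero_q _) (fact_ne_zero_q _)
    have harg : (if (j : ℕ) < m then (chooseZ (q + r + u) ((q : ℤ) + (j : ℕ) - (i : ℕ)) : ℚ)
        else (chooseZ (q + r + u) ((q : ℤ) + r + (j : ℕ) - (i : ℕ)) : ℚ)) =
        (chooseZ (q + r + u) ((va (j : ℕ) : ℤ) - (((i : ℕ) : ℤ) + 1)) : ℚ) := by
      by_cases h : (j : ℕ) < m
      · rw [if_pos h]
        congr 2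
        simp only [hva, if_pos h]
        push_cast
        ring
      · rw [if_neg h]
        congr 2
        simp only [hva, if_neg h]
        push_cast
        ring
    rw [harg, hcfun]
    rw [div_mul_eq_mul_div, eq_div_iff hDne]
    exact hek
  rw [hM, Matrix.det_transpose, Matrix.det_mul, Matrix.det_diagonal,
    det_evalMatrix]
  have hV0ne : Matrix.det (Matrix.vandermonde (fun i : Fin (m + s) => ((i : ℕ) : ℚ) + 1)) ≠ 0 := by
    rw [Matrix.det_vandermonde_ne_zero_iff]
    intro a b hab
    have : ((a : ℕ) : ℚ) = ((b : ℕ) : ℚ) := by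
      have := hab
      simpa using this
    exact Fin.ext (by exact_mod_cast this)
  have hT : Matrix.det (Tmat (m + s) (q + r + u)) =
      (∏ i ∈ range (m + s),
        (((i !) : ℚ) * ∏ t ∈ range ((m + s) - 1 - i), (((q + r + u : ℕ) : ℚ) + 1 + t))) /
        Matrix.det (Matrix.vandermonde (fun i : Fin (m + s) => ((i : ℕ) : ℚ) + 1)) := by
    have h1 := det_evalMatrix (m + s) (q + r + u) (fun i : Fin (m + s) => ((i : ℕ) : ℚ) + 1)
    rw [det_N0] at h1
    rw [eq_div_iff hV0ne]
    rw [mul_comm]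
    exact h1.symm
  rw [hT]
  rw [Fin.prod_univ_eq_prod_range cfun (m + s),
      det_vand_range (m + s) (fun a => ((va a : ℕ) : ℚ)),
      det_vand_range (m + s) (fun a => ((a : ℕ) : ℚ) + 1)]
  have hV0val : ∏ i ∈ range (m + s), ∏ j ∈ Ico (i + 1) (m + s),
      ((((j : ℕ) : ℚ) + 1) - (((i : ℕ) : ℚ) + 1)) = (hyperfac (m + s) : ℚ) := by
    rw [← W1full (m + s)]
    exact Finset.prod_congr rfl fun i _ => Finset.prod_congr rfl fun j _ => by ring
  rw [hV0val]
  -- N0 product value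
  have hN : ∏ i ∈ range (m + s),
      (((i !) : ℚ) * ∏ t ∈ range ((m + s) - 1 - i), (((q + r + u : ℕ) : ℚ) + 1 + t)) =
      (hyperfac (m + s) : ℚ) *
        ((hyperfac (q + r + u + (m + s)) : ℚ) / (hyperfac (q + r + u) : ℚ)) /
        ((((q + r + u)! : ℕ) : ℚ)) ^ (m + s) := by
    rw [Finset.prod_mul_distrib]
    have h1 : ∏ i ∈ range (m + s), ((i ! : ℕ) : ℚ) = (hyperfac (m + s) : ℚ) := by
      rw [hyperfac, Nat.cast_prod]
    have h2 : ∏ i ∈ range (m + s), ∏ t ∈ range ((m + s) - 1 - i),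
        (((q + r + u : ℕ) : ℚ) + 1 + t) =
        (hyperfac (q + r + u + (m + s)) : ℚ) / (hyperfac (q + r + u) : ℚ) /
          ((((q + r + u)! : ℕ) : ℚ)) ^ (m + s) := by
      have h3 : ∀ i ∈ range (m + s), ∏ t ∈ range ((m + s) - 1 - i),
          (((q + r + u : ℕ) : ℚ) + 1 + t) =
          ((((q + r + u) + ((m + s) - 1 - i))! : ℕ) : ℚ) / (((q + r + u)! : ℕ) : ℚ) :=
        fun i _ => prodq (q + r + u) ((m + s) - 1 - i)
      rw [Finset.prod_congr rfl h3, Finset.prod_div_distrib, Finset.prod_const, card_range,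
        Finset.prod_range_reflect (fun i => ((((q + r + u) + i)! : ℕ) : ℚ)) (m + s), hq]
    rw [h1, h2]
    ring
  rw [hN]
  have hE : ∏ i ∈ range (m + s), ∏ j ∈ Ico (i + 1) (m + s),
      (((va j : ℕ) : ℚ) - ((va i : ℕ) : ℚ)) =
      ((hyperfac m : ℚ) * ((hyperfac (r + s + m) : ℚ) / (hyperfac (r + s) : ℚ)) /
        ((hyperfac (r + m) : ℚ) / (hyperfac r : ℚ))) * (hyperfac s : ℚ) := by
    rw [Finset.prod_range_add]
    have hpart2 : ∏ t ∈ range s, ∏ j ∈ Ico ((m + t) + 1) (m + s),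
        (((va j : ℕ) : ℚ) - ((va (m + t) : ℕ) : ℚ)) = (hyperfac s : ℚ) := by
      have h4 : ∀ t ∈ range s, ∏ j ∈ Ico ((m + t) + 1) (m + s),
          (((va j : ℕ) : ℚ) - ((va (m + t) : ℕ) : ℚ)) = (((s - 1 - t)! : ℕ) : ℚ) := by
        intro t ht
        have ht' : t < s := mem_range.mp ht
        have h5 : ∀ j ∈ Ico (m + t + 1) (m + s),
            ((va j : ℕ) : ℚ) - ((va (m + t) : ℕ) : ℚ) = ((j : ℚ) - ((m + t : ℕ) : ℚ)) := by
          intro j hj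
          obtain ⟨hj1, hj2⟩ := mem_Ico.mp hj
          have hjm : ¬ (j < m) := by omega
          have hmt : ¬ (m + t < m) := by omega
          simp only [hva, if_neg hjm, if_neg hmt]
          push_cast
          ring
        rw [Finset.prod_congr rfl h5, W1inner (m + s) (m + t) (by omega)]
        have h6 : m + s - 1 - (m + t) = s - 1 - t := by omega
        rw [h6]
      rw [Finset.prod_congr rfl h4, W2full s]
    have hpart1 : ∏ i ∈ range m, ∏ j ∈ Ico (i + 1) (m + s),
        (((va j : ℕ) : ℚ) - ((va i : ℕ) : ℚ)) =
        (hyperfac m : ℚ) * ((hyperfac (r + s + m) : ℚ) / (hyperfac (r + s) : ℚ)) /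
          ((hyperfac (r + m) : ℚ) / (hyperfac r : ℚ)) := by
      have h6 : ∀ i ∈ range m, ∏ j ∈ Ico (i + 1) (m + s),
          (((va j : ℕ) : ℚ) - ((va i : ℕ) : ℚ)) =
          (((m - 1 - i)! : ℕ) : ℚ) *
            (((((r + m - 1 - i) + s)! : ℕ) : ℚ) / ((((r + m - 1 - i)!) : ℕ) : ℚ)) := by
        intro i hi
        have hi' : i < m := mem_range.mp hi
        rw [← Finset.prod_Ico_consecutive _ (by omega : i + 1 ≤ m) (by omega : m ≤ m + s)]
        congr 1
        · have h7 : ∀ j ∈ Ico (i + 1) m,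
              ((va j : ℕ) : ℚ) - ((va i : ℕ) : ℚ) = ((j : ℚ) - ((i : ℕ) : ℚ)) := by
            intro j hj
            obtain ⟨hj1, hj2⟩ := mem_Ico.mp hj
            simp only [hva, if_pos hj2, if_pos hi']
            push_cast
            ring
          rw [Finset.prod_congr rfl h7, W1inner m i hi']
        · rw [Finset.prod_Ico_eq_prod_range]
          have hms : m + s - m = s := by omega
          rw [hms]
          have h8 : ∀ t ∈ range s,
              ((va (m + t) : ℕ) : ℚ) - ((va i : ℕ) : ℚ) = (((r + m - 1 - i : ℕ) : ℚ) + 1 + t) := by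
            intro t ht
            have hmt : ¬ (m + t < m) := by omega
            simp only [hva, if_neg hmt, if_pos hi']
            have h9 : ((r + m - 1 - i : ℕ) : ℚ) = (r : ℚ) + (m : ℚ) - 1 - (i : ℚ) := by
              have h9' : r + m - 1 - i + (i + 1) = r + m := by omega
              have := congrArg (Nat.cast : ℕ → ℚ) h9'
              push_cast at this
              linarith
            rw [h9]
            push_cast
            ring
          rw [Finset.prod_congr rfl h8, prodq (r + m - 1 - i) s]
      rw [Finset.prod_congr rfl h6, Finset.prod_mul_distrib, Finset.prod_div_distrib]
      have h10 : ∏ i ∈ range m, ((((r + m - 1 - i) + s)! : ℕ) : ℚ) =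
          (hyperfac (r + s + m) : ℚ) / (hyperfac (r + s) : ℚ) := by
        have h11 : ∀ i ∈ range m,
            ((((r + m - 1 - i) + s)! : ℕ) : ℚ) = (((r + s + (m - 1 - i))! : ℕ) : ℚ) := by
          intro i hi
          have hi' : i < m := mem_range.mp hi
          have h11' : (r + m - 1 - i) + s = r + s + (m - 1 - i) := by omega
          rw [h11']
        rw [Finset.prod_congr rfl h11,
          Finset.prod_range_reflect (fun i => (((r + s + i)! : ℕ) : ℚ)) m, hq (r + s) m]
      have h12 : ∏ i ∈ range m, (((r + m - 1 - i)! : ℕ) : ℚ) =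
          (hyperfac (r + m) : ℚ) / (hyperfac r : ℚ) := by
        have h13 : ∀ i ∈ range m,
            (((r + m - 1 - i)! : ℕ) : ℚ) = (((r + (m - 1 - i))! : ℕ) : ℚ) := by
          intro i hi
          have hi' : i < m := mem_range.mp hi
          have h14 : r + m - 1 - i = r + (m - 1 - i) := by omega
          rw [h14]
        rw [Finset.prod_congr rfl h13,
          Finset.prod_range_reflect (fun i => (((r + i)! : ℕ) : ℚ)) m, hq r m]
      rw [h10, h12, W2full m]
      ring
    rw [hpart1, hpart2]
  rw [hE]
  have hC : ∏ i ∈ range (m + s), cfun i =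
      ((((q + r + u)! : ℕ) : ℚ)) ^ m /
        (((hyperfac (q + m) : ℚ) / (hyperfac q : ℚ)) *
          ((hyperfac (r + u + s + m) : ℚ) / (hyperfac (r + u + s) : ℚ))) *
      (((((q + r + u)! : ℕ) : ℚ)) ^ s /
        (((hyperfac (q + r + m + s) : ℚ) / (hyperfac (q + r + m) : ℚ)) *
          ((hyperfac (u + s) : ℚ) / (hyperfac u : ℚ)))) := by
    rw [Finset.prod_range_add]
    have hc1 : ∀ i ∈ range m, cfun i =
        (((q + r + u)! : ℕ) : ℚ) /
          ((((q + i)! : ℕ) : ℚ) * ((((r + u + s) + (m - 1 - i))! : ℕ) : ℚ)) := by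
      intro i hi
      have hi' : i < m := mem_range.mp hi
      rw [hcfun]
      simp only [hva, if_pos hi']
      have e1 : q + i + 1 - 1 = q + i := by omega
      have e2 : q + r + u + (m + s) - (q + i + 1) = (r + u + s) + (m - 1 - i) := by omega
      rw [e1, e2]
    have hc2 : ∀ t ∈ range s, cfun (m + t) =
        (((q + r + u)! : ℕ) : ℚ) /
          ((((q + r + m + t)! : ℕ) : ℚ) * (((u + (s - 1 - t))! : ℕ) : ℚ)) := by
      intro t ht
      have hmt : ¬ (m + t < m) := by omega
      have ht' : t < s := mem_range.mp ht
      rw [hcfun]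
      simp only [hva, if_neg hmt]
      have e1 : q + r + (m + t) + 1 - 1 = q + r + m + t := by omega
      have e2 : q + r + u + (m + s) - (q + r + (m + t) + 1) = u + (s - 1 - t) := by omega
      rw [e1, e2]
    have hp1 : ∏ i ∈ range m, cfun i =
        ((((q + r + u)! : ℕ) : ℚ)) ^ m /
          (((hyperfac (q + m) : ℚ) / (hyperfac q : ℚ)) *
            ((hyperfac (r + u + s + m) : ℚ) / (hyperfac (r + u + s) : ℚ))) := by
      rw [Finset.prod_congr rfl hc1, Finset.prod_div_distrib, Finset.prod_const, card_range,
        Finset.prod_mul_distrib, hq q m,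
        Finset.prod_range_reflect (fun i => ((((r + u + s) + i)! : ℕ) : ℚ)) m,
        hq (r + u + s) m]
    have hp2 : ∏ t ∈ range s, cfun (m + t) =
        ((((q + r + u)! : ℕ) : ℚ)) ^ s /
          (((hyperfac (q + r + m + s) : ℚ) / (hyperfac (q + r + m) : ℚ)) *
            ((hyperfac (u + s) : ℚ) / (hyperfac u : ℚ))) := by
      rw [Finset.prod_congr rfl hc2, Finset.prod_div_distrib, Finset.prod_const, card_range,
        Finset.prod_mul_distrib, hq (q + r + m) s,
        Finset.prod_range_reflect (fun t => (((u + t)! : ℕ) : ℚ)) s,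
        hq u s]
    rw [hp1, hp2]
  rw [hC, MacQ, MacQ]
  have e1 : m + s - m = s := by omega
  have e2 : q + r + u - q - r = u := by omega
  have e3 : q + r + u - q = r + u := by omega
  have e4 : m + s + (q + r + u) - q = m + s + r + u := by omega
  rw [e1, e2, e3, e4]
  have g1 : m + q + r = q + r + m := by ring
  have g2 : m + q = q + m := by ring
  have g3 : m + r = r + m := by ring
  have g4 : s + u + r = r + u + s := by ring
  have g5 : s + u = u + s := by ring
  have g6 : s + r = r + s := by ring
  have g7 : u + r = r + u := by ring
  have g8 : m + s + r + u = r + u + s + m := by ring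
  have g9 : m + s + q + r = q + r + m + s := by ring
  have g10 : m + s + (q + r + u) = q + r + u + (m + s) := by ring
  have g11 : m + s + r = r + s + m := by ring
  rw [g1, g2, g3, g4, g5, g6, g7, g8, g9, g10, g11]
  exact final_identity (hyperfac_ne_zero _) (hyperfac_ne_zero _) (hyperfac_ne_zero _)
    (hyperfac_ne_zero _) (hyperfac_ne_zero _) (hyperfac_ne_zero _) (hyperfac_ne_zero _)
    (hyperfac_ne_zero _) (hyperfac_ne_zero _) (hyperfac_ne_zero _) (hyperfac_ne_zero _)
    (hyperfac_ne_zero _) (hyperfac_ne_zero _) (hyperfac_ne_zero _) (hyperfac_ne_zero _)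
    (hyperfac_ne_zero _) (hyperfac_ne_zero _) (hyperfac_ne_zero _) (hyperfac_ne_zero _)
    (fact_ne_zero_q _)
end

section
/- For nonnegative integers a, b, c with a, b, c all positive, MacMahon's number Mac(a,b,c) = H(a)H(b)H(c)H(a+b+c)/(H(a+b)H(a+c)H(b+c)) is a positive integer all of whose prime divisors are at most a+b+c-1. If one of a, b, c is zero, then Mac(a,b,c) = 1. -/
open Finset

lemma hyperfac_zero : hyperfac 0 = 1 := rfl

lemma hyperfac_succ (n : ℕ) : hyperfac (n + 1) = hyperfac n * n.factorial :=
  Finset.prod_range_succ _ _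

lemma hyperfac_pos (n : ℕ) : 0 < hyperfac n :=
  Finset.prod_pos fun i _ => Nat.factorial_pos i

theorem reindexQ (n : ℕ) (g : ℕ → ℕ → ℤ) :
    ∏ i : Fin n, ∏ j ∈ Finset.Ioi i, g i j = ∏ j ∈ range n, ∏ i ∈ range j, g i j := by
  calc ∏ i : Fin n, ∏ j ∈ Finset.Ioi i, g i j
      = ∏ i : Fin n, ∏ j : Fin n, if (i:ℕ) < (j:ℕ) then g i j else 1 := by
        refine prod_congr rfl fun i _ => ?_
        rw [show (Finset.Ioi i) = univ.filter (fun j : Fin n => (i:ℕ) < (j:ℕ)) by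
          ext j; simp only [Finset.mem_Ioi, Finset.mem_filter, Finset.mem_univ, true_and,
            Fin.lt_iff_val_lt_val], prod_filter]
    _ = ∏ j : Fin n, ∏ i : Fin n, if (i:ℕ) < (j:ℕ) then g i j else 1 := Finset.prod_comm
    _ = ∏ j : Fin n, ∏ i ∈ range n, if i < (j:ℕ) then g i j else 1 := by
        refine prod_congr rfl fun j _ => ?_
        exact Fin.prod_univ_eq_prod_range (fun i => if i < (j:ℕ) then g i j else 1) n
    _ = ∏ j ∈ range n, ∏ i ∈ range n, if i < j then g i j else 1 :=
        Fin.prod_univ_eq_prod_range (fun j => ∏ i ∈ range n, if i < j then g i j else 1) n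
    _ = ∏ j ∈ range n, ∏ i ∈ range j, g i j := by
        refine prod_congr rfl fun j hj => ?_
        rw [mem_range] at hj
        rw [← prod_filter]
        congr 1
        ext i; simp only [mem_filter, mem_range]; omega

lemma natprod (x : ℕ) (m : ℕ) :
    ∏ i ∈ range m, ((x:ℤ) + m - i) = ↑(∏ i ∈ range m, (x + i + 1)) := by
  push_cast
  rw [← Finset.prod_range_reflect (fun i => (x:ℤ) + i + 1) m]
  refine prod_congr rfl fun i hi => ?_
  rw [mem_range] at hi
  have h : ((m - 1 - i : ℕ) : ℤ) = (m:ℤ) - 1 - i := by omega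
  rw [h]; ring

lemma prod_sub_fact (j : ℕ) : ∏ i ∈ range j, ((j:ℤ) - i) = (j.factorial : ℤ) := by
  have h := natprod 0 j
  simp only [Nat.cast_zero, zero_add, Finset.prod_range_add_one_eq_factorial] at h
  exact h

lemma fac_prod (m : ℕ) : ∀ b : ℕ, m.factorial * ∏ j ∈ range b, (m + j + 1) = (m + b).factorial
  | 0 => by simp
  | b + 1 => by
    rw [prod_range_succ, ← mul_assoc, fac_prod m b, show m + (b+1) = (m+b)+1 by ring,
      Nat.factorial_succ]
    ring

lemma keyB (b c : ℕ) : ∀ a : ℕ, hyperfac (a+b+c) * hyperfac c =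
    hyperfac (a+c) * hyperfac (b+c) * ∏ i ∈ range a, ∏ j ∈ range b, (c+i+j+1)
  | 0 => by simp [mul_comm]
  | a + 1 => by
    have h3 : (a+c).factorial * ∏ j ∈ range b, (c+a+j+1) = (a+b+c).factorial := by
      rw [show ∏ j ∈ range b, (c+a+j+1) = ∏ j ∈ range b, ((a+c)+j+1) from
        prod_congr rfl fun j _ => by ring, fac_prod (a+c) b]
      congr 1; ring
    calc hyperfac (a+1+b+c) * hyperfac c
        = (hyperfac (a+b+c) * hyperfac c) * (a+b+c).factorial := by
          rw [show a+1+b+c = (a+b+c)+1 by ring, hyperfac_succ]; ring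
      _ = hyperfac (a+c) * hyperfac (b+c) * (∏ i ∈ range a, ∏ j ∈ range b, (c+i+j+1)) *
            ((a+c).factorial * ∏ j ∈ range b, (c+a+j+1)) := by rw [keyB b c a, h3]
      _ = hyperfac (a+1+c) * hyperfac (b+c) * ∏ i ∈ range (a+1), ∏ j ∈ range b, (c+i+j+1) := by
          rw [show a+1+c = (a+c)+1 by ring, hyperfac_succ, prod_range_succ]; ring

lemma keyA (a b : ℕ) : hyperfac (a+b) =
    hyperfac a * hyperfac b * ∏ i ∈ range a, ∏ j ∈ range b, (i+j+1) := by
  have h := keyB b 0 a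
  simpa [hyperfac_zero] using h

lemma dvd_key (a b c : ℕ) :
    hyperfac (a+b) ∣ hyperfac a * hyperfac b * ∏ i ∈ range a, ∏ j ∈ range b, (c+i+j+1) := by
  cases h : a + b with
  | zero => simp [hyperfac_zero]
  | succ n =>
    set w : ℕ → ℤ := fun k => if k < a then (k:ℤ) else (k:ℤ) + c with hw
    have hd := Matrix.superFactorial_dvd_vandermonde_det (fun i : Fin (n+1) => w i)
    rw [Matrix.det_vandermonde, reindexQ (n+1) (fun i j => w j - w i), ← h] at hd
    have hsf : Nat.superFactorial n = hyperfac (a+b) := by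
      rw [h, ← Nat.prod_range_succ_factorial]; rfl
    have hcomp : ∏ j ∈ range (a+b), ∏ i ∈ range j, (w j - w i) =
        ((hyperfac a * hyperfac b * ∏ i ∈ range a, ∏ j ∈ range b, (c+i+j+1) : ℕ) : ℤ) := by
      rw [prod_range_add]
      have p1 : ∏ j ∈ range a, ∏ i ∈ range j, (w j - w i) = ((hyperfac a : ℕ) : ℤ) := by
        rw [hyperfac, Nat.cast_prod]
        refine prod_congr rfl fun j hj => ?_
        rw [mem_range] at hj
        rw [show ∏ i ∈ range j, (w j - w i) = ∏ i ∈ range j, ((j:ℤ) - i) from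
          prod_congr rfl fun i hi => by
            rw [mem_range] at hi
            simp only [hw, if_pos hj, if_pos (lt_trans hi hj)]]
        exact prod_sub_fact j
      have p2 : ∏ t ∈ range b, ∏ i ∈ range (a + t), (w (a + t) - w i) =
          ((hyperfac b * ∏ i ∈ range a, ∏ j ∈ range b, (c+i+j+1) : ℕ) : ℤ) := by
        have inner : ∀ t, ∏ i ∈ range (a + t), (w (a + t) - w i) =
            ((t.factorial * ∏ i ∈ range a, (c+t+i+1) : ℕ) : ℤ) := by
          intro t
          have hwat : w (a + t) = (a:ℤ) + t + c := by
            simp only [hw]; rw [if_neg (by omega)]; push_cast; ring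
          rw [prod_range_add]
          have q1 : ∏ i ∈ range a, (w (a + t) - w i) =
              ((∏ i ∈ range a, (c+t+i+1) : ℕ) : ℤ) := by
            rw [show ∏ i ∈ range a, (w (a+t) - w i) =
                ∏ i ∈ range a, (((c+t : ℕ):ℤ) + a - i) from
              prod_congr rfl fun i hi => by
                rw [mem_range] at hi
                rw [hwat]; simp only [hw, if_pos hi]; push_cast; ring]
            rw [natprod (c+t) a]
          have q2 : ∏ s ∈ range t, (w (a + t) - w (a + s)) = (t.factorial : ℤ) := by
            rw [show ∏ s ∈ range t, (w (a+t) - w (a+s)) = ∏ s ∈ range t, ((t:ℤ) - s) from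
              prod_congr rfl fun s hs => by
                rw [mem_range] at hs
                rw [hwat]; simp only [hw]; rw [if_neg (by omega)]; push_cast; ring]
            exact prod_sub_fact t
          rw [q1, q2]; push_cast; ring
        calc ∏ t ∈ range b, ∏ i ∈ range (a + t), (w (a + t) - w i)
            = ∏ t ∈ range b, ((t.factorial * ∏ i ∈ range a, (c+t+i+1) : ℕ) : ℤ) :=
              prod_congr rfl fun t _ => inner t
          _ = ↑(∏ t ∈ range b, (t.factorial * ∏ i ∈ range a, (c+t+i+1))) :=
              (Nat.cast_prod _ _).symm
          _ = ((hyperfac b * ∏ i ∈ range a, ∏ j ∈ range b, (c+i+j+1) : ℕ) : ℤ) := by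
              congr 1
              rw [prod_mul_distrib, ← hyperfac]
              congr 1
              rw [Finset.prod_comm]
              exact prod_congr rfl fun i _ => prod_congr rfl fun t _ => by ring
      rw [p1, p2]; push_cast; ring
    rw [hcomp, hsf] at hd
    rw [← h]
    exact_mod_cast hd

lemma D_dvd_P (a b c : ℕ) :
    (∏ i ∈ range a, ∏ j ∈ range b, (i+j+1)) ∣ ∏ i ∈ range a, ∏ j ∈ range b, (c+i+j+1) := by
  have h := dvd_key a b c
  rw [keyA a b, mul_assoc, mul_assoc] at h
  exact (mul_dvd_mul_iff_left (hyperfac_pos b).ne').mp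
    ((mul_dvd_mul_iff_left (hyperfac_pos a).ne').mp h)

/-- **Properties of MacMahon's numbers.** If `a, b, c` are all positive then
`Mac(a,b,c) = H(a)H(b)H(c)H(a+b+c)/(H(a+b)H(a+c)H(b+c))` is a positive integer all of whose prime
divisors are at most `a+b+c-1`; if one of `a, b, c` is zero then `Mac(a,b,c) = 1`. -/
theorem stmt11 (a b c : ℕ) :
    (0 < a → 0 < b → 0 < c → ∃ N : ℕ, 0 < N ∧ (N : ℚ) = MacQ a b c ∧
      ∀ p : ℕ, p.Prime → p ∣ N → p ≤ a + b + c - 1) ∧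
    ((a = 0 ∨ b = 0 ∨ c = 0) → MacQ a b c = 1) := by
  have h1 : ∀ n, ((hyperfac n : ℚ)) ≠ 0 := fun n => Nat.cast_ne_zero.mpr (hyperfac_pos n).ne'
  constructor
  · intro ha hb hc
    set D := ∏ i ∈ range a, ∏ j ∈ range b, (i+j+1) with hD
    set P := ∏ i ∈ range a, ∏ j ∈ range b, (c+i+j+1) with hP
    have hdvd : D ∣ P := D_dvd_P a b c
    have hDpos : 0 < D := prod_pos fun i _ => prod_pos fun j _ => by omega
    have hPpos : 0 < P := prod_pos fun i _ => prod_pos fun j _ => by omega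
    set N := P / D with hNdef
    have hN : N * D = P := Nat.div_mul_cancel hdvd
    have natid : N * (hyperfac (a+b) * hyperfac (a+c) * hyperfac (b+c)) =
        hyperfac a * hyperfac b * hyperfac c * hyperfac (a+b+c) := by
      calc N * (hyperfac (a+b) * hyperfac (a+c) * hyperfac (b+c))
          = (N * D) * (hyperfac a * hyperfac b * (hyperfac (a+c) * hyperfac (b+c))) := by
            rw [keyA a b]; ring
        _ = hyperfac a * hyperfac b * (hyperfac (a+c) * hyperfac (b+c) * P) := by
            rw [hN]; ring
        _ = hyperfac a * hyperfac b * (hyperfac (a+b+c) * hyperfac c) := by rw [keyB b c a]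
        _ = hyperfac a * hyperfac b * hyperfac c * hyperfac (a+b+c) := by ring
    refine ⟨N, Nat.div_pos (Nat.le_of_dvd hPpos hdvd) hDpos, ?_, ?_⟩
    · rw [MacQ, eq_div_iff (mul_ne_zero (mul_ne_zero (h1 _) (h1 _)) (h1 _))]
      exact_mod_cast natid
    · intro p hp hpd
      have hNP : N ∣ P := ⟨D, hN.symm⟩
      obtain ⟨i, hi, hpi⟩ := hp.prime.exists_mem_finset_dvd (hpd.trans hNP)
      obtain ⟨j, hj, hpj⟩ := hp.prime.exists_mem_finset_dvd hpi
      rw [mem_range] at hi hj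
      have := Nat.le_of_dvd (by omega) hpj
      omega
  · intro h0
    rcases h0 with rfl | rfl | rfl <;>
      · rw [MacQ, div_eq_one_iff_eq (mul_ne_zero (mul_ne_zero (h1 _) (h1 _)) (h1 _))]
        simp only [hyperfac_zero, Nat.cast_one, Nat.zero_add, Nat.add_zero, zero_add, add_zero]
        ring
end

section
/- Let M be an n×n matrix with entries M_{i,j} = C(p, q+j-i) for nonnegative integers p ≥ q. Then det M = Mac(n, p-q, q), where Mac(a,b,c) = H(a)H(b)H(c)H(a+b+c)/(H(a+b)H(a+c)H(b+c)) and H is the hyperfactorial. -/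
open Finset Matrix

lemma chooseZ_sub (p a b : ℕ) :
    chooseZ p ((a : ℤ) - b) = if b ≤ a then p.choose (a - b) else 0 := by
  unfold chooseZ
  by_cases h : b ≤ a
  · rw [if_pos (by omega : (0:ℤ) ≤ (a:ℤ) - b), if_pos h]
    congr 1
    omega
  · rw [if_neg (by omega : ¬ (0:ℤ) ≤ (a:ℤ) - b), if_neg h]

lemma hyperfac_add_s12 (m k : ℕ) :
    hyperfac (m + k) = hyperfac m * ∏ j ∈ Finset.range k, Nat.factorial (m + j) := by
  simpa [hyperfac] using Finset.prod_range_add Nat.factorial m k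

/-- Truncated Vandermonde convolution. -/
lemma conv (p q i j n : ℕ) (hpq : q ≤ p) (hj : j < n) :
    ∑ k ∈ Finset.range n, chooseZ p ((q : ℤ) + k - i) * j.choose k
      = (p + j).choose (p - q + i) := by
  have hshrink : ∑ k ∈ Finset.range (j + 1), chooseZ p ((q : ℤ) + k - i) * j.choose k
      = ∑ k ∈ Finset.range n, chooseZ p ((q : ℤ) + k - i) * j.choose k := by
    apply Finset.sum_subset (Finset.range_subset_range.mpr (by omega))
    intro k hk hk'
    have : j < k := by
      simp only [Finset.mem_range] at hk hk'; omega
    rw [Nat.choose_eq_zero_of_lt this, mul_zero]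
  rw [← hshrink]
  have hcz : ∀ k : ℕ, chooseZ p ((q : ℤ) + k - i)
      = if i ≤ q + k then p.choose (q + k - i) else 0 := by
    intro k
    have : (q : ℤ) + k - i = ((q + k : ℕ) : ℤ) - i := by push_cast; ring
    rw [this, chooseZ_sub]
  by_cases hi : i ≤ q + j
  · -- main case
    set S := q + j - i with hS
    have hbi : p - q + i ≤ p + j := by omega
    have hrhs : (p + j).choose (p - q + i) = (p + j).choose S := by
      rw [← Nat.choose_symm hbi]
      congr 1
      omega
    rw [hrhs, Nat.add_choose_eq, Finset.Nat.sum_antidiagonal_eq_sum_range_succ_mk]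
    -- RHS is now ∑ c ∈ range (S+1), p.choose c * j.choose (S - c)
    rw [← Finset.sum_range_reflect (fun c => p.choose c * j.choose (S - c)) (S + 1)]
    -- RHS : ∑ c ∈ range (S+1), p.choose (S+1-1-c) * j.choose (S - (S+1-1-c))
    -- LHS : reflect
    rw [← Finset.sum_range_reflect
      (fun k => chooseZ p ((q : ℤ) + k - i) * j.choose k) (j + 1)]
    have hL : ∀ k ∈ Finset.range (j + 1),
        chooseZ p ((q : ℤ) + ((j + 1 - 1 - k : ℕ) : ℤ) - (i : ℤ)) * j.choose (j + 1 - 1 - k)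
          = (if k ≤ S then p.choose (S - k) else 0) * j.choose k := by
      intro k hk
      have hkj : k ≤ j := by simp only [Finset.mem_range] at hk; omega
      have h1 : j + 1 - 1 - k = j - k := by omega
      rw [h1, hcz (j - k), Nat.choose_symm hkj]
      congr 1
      by_cases hks : k ≤ S
      · rw [if_pos (by omega), if_pos hks]
        congr 1
        omega
      · rw [if_neg (by omega), if_neg hks]
    rw [Finset.sum_congr rfl hL]
    have hR : ∀ c ∈ Finset.range (S + 1),
        p.choose (S + 1 - 1 - c) * j.choose (S - (S + 1 - 1 - c))
          = (if c ≤ S then p.choose (S - c) else 0) * j.choose c := by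
      intro c hc
      have hcS : c ≤ S := by simp only [Finset.mem_range] at hc; omega
      have h1 : S + 1 - 1 - c = S - c := by omega
      have h2 : S - (S - c) = c := by omega
      rw [h1, h2, if_pos hcS]
    rw [Finset.sum_congr rfl hR]
    -- both sums of G over range (j+1) and range (S+1); compare via range (S+j+1)
    have hzero : ∀ k, ¬ (k ≤ S ∧ k ≤ j) →
        (if k ≤ S then p.choose (S - k) else 0) * j.choose k = 0 := by
      intro k hk
      by_cases h : k ≤ S
      · rw [Nat.choose_eq_zero_of_lt (show j < k by omega), mul_zero]
      · rw [if_neg h, zero_mul]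
    have e1 : ∑ k ∈ Finset.range (j + 1),
        (if k ≤ S then p.choose (S - k) else 0) * j.choose k
        = ∑ k ∈ Finset.range (S + j + 1),
        (if k ≤ S then p.choose (S - k) else 0) * j.choose k := by
      apply Finset.sum_subset (Finset.range_subset_range.mpr (by omega))
      intro k hk hk'
      simp only [Finset.mem_range] at hk hk'
      exact hzero k (by omega)
    have e2 : ∑ k ∈ Finset.range (S + 1),
        (if k ≤ S then p.choose (S - k) else 0) * j.choose k
        = ∑ k ∈ Finset.range (S + j + 1),
        (if k ≤ S then p.choose (S - k) else 0) * j.choose k := by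
      apply Finset.sum_subset (Finset.range_subset_range.mpr (by omega))
      intro k hk hk'
      simp only [Finset.mem_range] at hk hk'
      exact hzero k (by omega)
    rw [e1, ← e2]
  · -- i > q + j : everything is zero
    have hrhs : (p + j).choose (p - q + i) = 0 :=
      Nat.choose_eq_zero_of_lt (by omega)
    rw [hrhs]
    apply Finset.sum_eq_zero
    intro k hk
    have hkj : k ≤ j := by simp only [Finset.mem_range] at hk; omega
    rw [hcz, if_neg (by omega), zero_mul]

lemma det_descFactorial (n q : ℕ) :
    Matrix.det (Matrix.of fun i j : Fin n =>
      (((q + (j : ℕ)).descFactorial (i : ℕ) : ℕ) : ℚ)) = (hyperfac n : ℚ) := by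
  have hT : (Matrix.of fun i j : Fin n =>
      (((q + (j : ℕ)).descFactorial (i : ℕ) : ℕ) : ℚ))
      = (Matrix.of fun i j : Fin n =>
        ((Polynomial.eval (((q + (i : ℕ) : ℕ)) : ℚ) (descPochhammer ℚ (j : ℕ)))))ᵀ := by
    ext i j
    simp only [Matrix.of_apply, Matrix.transpose_apply]
    rw [descPochhammer_eval_eq_descFactorial]
  rw [hT, Matrix.det_transpose,
    ← Matrix.det_eval_matrixOfPolynomials_eq_det_vandermonde
      (fun i : Fin n => (((q + (i : ℕ) : ℕ)) : ℚ)) (fun j : Fin n => descPochhammer ℚ (j : ℕ))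
      (fun j => descPochhammer_natDegree ℚ (j : ℕ)) (fun j => monic_descPochhammer ℚ (j : ℕ))]
  have hv : (fun i : Fin n => (((q + (i : ℕ) : ℕ)) : ℚ))
      = fun i : Fin n => (((i : ℕ) : ℚ) + (q : ℚ)) := by
    ext i; push_cast; ring
  rw [hv, Matrix.det_vandermonde_add]
  cases n with
  | zero => simp [hyperfac]
  | succ m =>
      rw [Matrix.det_vandermonde_id_eq_superFactorial (R := ℚ) m]
      norm_cast
      rw [hyperfac, Nat.prod_range_succ_factorial]

/-- **Binomial determinant (the `r = 0` case).** The `n×n` matrix with entries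
`M_{i,j} = C(p, q+j-i)` (with `p ≥ q`) has determinant `Mac(n, p-q, q)`. -/
theorem stmt12 (n p q : ℕ) (hpq : q ≤ p) :
    Matrix.det (Matrix.of fun i j : Fin n => (chooseZ p ((q : ℤ) + (j : ℕ) - (i : ℕ)) : ℚ)) =
      MacQ n (p - q) q := by
  set b := p - q with hb
  set M : Matrix (Fin n) (Fin n) ℚ :=
    Matrix.of fun i j : Fin n => (chooseZ p ((q : ℤ) + (j : ℕ) - (i : ℕ)) : ℚ) with hM
  set B : Matrix (Fin n) (Fin n) ℚ :=
    Matrix.of fun k j : Fin n => (((j : ℕ).choose (k : ℕ) : ℕ) : ℚ) with hB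
  -- Step 1 : M * B has entries C(p+j, b+i)
  have hMB : M * B = Matrix.of fun i j : Fin n => (((p + (j : ℕ)).choose (b + (i : ℕ)) : ℕ) : ℚ) := by
    ext i j
    simp only [Matrix.mul_apply, hM, hB, Matrix.of_apply]
    rw [Fin.sum_univ_eq_sum_range
      (fun k => (chooseZ p ((q : ℤ) + k - (i : ℕ)) : ℚ) * (((j : ℕ).choose k : ℕ) : ℚ)) n]
    rw [show (∑ k ∈ Finset.range n,
        (chooseZ p ((q : ℤ) + k - (i : ℕ)) : ℚ) * (((j : ℕ).choose k : ℕ) : ℚ))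
        = ((∑ k ∈ Finset.range n, chooseZ p ((q : ℤ) + k - (i : ℕ)) * (j : ℕ).choose k : ℕ) : ℚ) by
      push_cast; rfl]
    rw [conv p q (i : ℕ) (j : ℕ) n hpq j.isLt]
  -- Step 2 : det B = 1
  have hdetB : B.det = 1 := by
    rw [Matrix.det_of_upperTriangular (by
      intro i j hij
      simp only [hB, Matrix.of_apply]
      exact_mod_cast congrArg (Nat.cast : ℕ → ℚ) (Nat.choose_eq_zero_of_lt hij))]
    simp [hB]
  have hdetM : M.det = (M * B).det := by
    rw [Matrix.det_mul, hdetB, mul_one]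
  rw [show Matrix.det (Matrix.of fun i j : Fin n =>
      (chooseZ p ((q : ℤ) + (j : ℕ) - (i : ℕ)) : ℚ)) = M.det from rfl, hdetM, hMB]
  -- Step 3 : pull out the 1/(b+i)! from row i
  have hfac_ne : ∀ m : ℕ, ((Nat.factorial m : ℕ) : ℚ) ≠ 0 := fun m => by
    exact_mod_cast (Nat.factorial_pos m).ne'
  have hstep3 : (Matrix.of fun i j : Fin n => (((p + (j : ℕ)).choose (b + (i : ℕ)) : ℕ) : ℚ))
      = Matrix.of (fun i j : Fin n =>
        (fun i : Fin n => (((Nat.factorial (b + (i : ℕ)) : ℕ) : ℚ))⁻¹) i *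
          (Matrix.of fun i j : Fin n =>
            (((p + (j : ℕ)).descFactorial (b + (i : ℕ)) : ℕ) : ℚ)) i j) := by
    ext i j
    simp only [Matrix.of_apply]
    rw [Nat.descFactorial_eq_factorial_mul_choose]
    push_cast
    rw [← mul_assoc, inv_mul_cancel₀ (hfac_ne _), one_mul]
  rw [hstep3, Matrix.det_mul_column]
  -- Step 4 : pull out descFactorial (p+j) b from column j
  have hstep4 : (Matrix.of fun i j : Fin n =>
        (((p + (j : ℕ)).descFactorial (b + (i : ℕ)) : ℕ) : ℚ))
      = Matrix.of (fun i j : Fin n =>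
        (fun j : Fin n => (((p + (j : ℕ)).descFactorial b : ℕ) : ℚ)) j *
          (Matrix.of fun i j : Fin n =>
            (((q + (j : ℕ)).descFactorial (i : ℕ) : ℕ) : ℚ)) i j) := by
    ext i j
    simp only [Matrix.of_apply]
    have h := Nat.descFactorial_mul_descFactorial
      (show b ≤ b + (i : ℕ) by omega) (n := p + (j : ℕ))
    rw [show p + (j : ℕ) - b = q + (j : ℕ) by omega,
      show b + (i : ℕ) - b = (i : ℕ) by omega] at h
    rw [← h]
    push_cast
    ring
  rw [hstep4, Matrix.det_mul_row, det_descFactorial n q]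
  -- Step 5 : the final factorial bookkeeping
  have hdesc : ∀ j : ℕ, (((p + j).descFactorial b : ℕ) : ℚ)
      = ((Nat.factorial (p + j) : ℕ) : ℚ) / ((Nat.factorial (q + j) : ℕ) : ℚ) := by
    intro j
    have h := Nat.factorial_mul_descFactorial (show b ≤ p + j by omega)
    rw [show p + j - b = q + j by omega] at h
    rw [eq_div_iff (hfac_ne (q + j))]
    have h' := congrArg (Nat.cast (R := ℚ)) h
    push_cast at h'
    linear_combination h'
  -- products over Fin n → range n
  rw [Fin.prod_univ_eq_prod_range (fun i => (((Nat.factorial (b + i) : ℕ) : ℚ))⁻¹) n,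
    Fin.prod_univ_eq_prod_range (fun j => (((p + j).descFactorial b : ℕ) : ℚ)) n]
  set A : ℚ := ∏ j ∈ Finset.range n, ((Nat.factorial (q + j) : ℕ) : ℚ) with hA
  set Bf : ℚ := ∏ j ∈ Finset.range n, ((Nat.factorial (b + j) : ℕ) : ℚ) with hBf
  set Cf : ℚ := ∏ j ∈ Finset.range n, ((Nat.factorial (p + j) : ℕ) : ℚ) with hCf
  have hprod_inv : (∏ j ∈ Finset.range n, (((Nat.factorial (b + j) : ℕ) : ℚ))⁻¹) = Bf⁻¹ := by
    rw [hBf, ← Finset.prod_inv_distrib]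
  have hprod_desc : (∏ j ∈ Finset.range n, (((p + j).descFactorial b : ℕ) : ℚ)) = Cf / A := by
    rw [hCf, hA, ← Finset.prod_div_distrib]
    exact Finset.prod_congr rfl fun j _ => hdesc j
  rw [hprod_inv, hprod_desc]
  have hA_ne : A ≠ 0 := by
    rw [hA]; exact Finset.prod_ne_zero_iff.mpr fun j _ => hfac_ne _
  have hBf_ne : Bf ≠ 0 := by
    rw [hBf]; exact Finset.prod_ne_zero_iff.mpr fun j _ => hfac_ne _
  have hH_ne : ∀ m : ℕ, ((hyperfac m : ℕ) : ℚ) ≠ 0 := fun m => by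
    have : 0 < hyperfac m := Finset.prod_pos fun i _ => Nat.factorial_pos i
    exact_mod_cast this.ne'
  -- expand MacQ
  have hq : ((hyperfac (n + q) : ℕ) : ℚ) = ((hyperfac q : ℕ) : ℚ) * A := by
    rw [add_comm n q, hyperfac_add_s12, hA]
    push_cast
    rfl
  have hbq : ((hyperfac (n + b) : ℕ) : ℚ) = ((hyperfac b : ℕ) : ℚ) * Bf := by
    rw [add_comm n b, hyperfac_add_s12, hBf]
    push_cast
    rfl
  have hnbq : ((hyperfac (n + b + q) : ℕ) : ℚ) = ((hyperfac p : ℕ) : ℚ) * Cf := by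
    rw [show n + b + q = p + n by omega, hyperfac_add_s12, hCf]
    push_cast
    rfl
  have hbq2 : ((hyperfac (b + q) : ℕ) : ℚ) = ((hyperfac p : ℕ) : ℚ) := by
    rw [show b + q = p by omega]
  rw [MacQ, hq, hbq, hnbq, hbq2]
  field_simp [hA_ne, hBf_ne, hH_ne b, hH_ne q, hH_ne p]
end

section
/- Let a, b, c be positive integers and let h(j) = dim_K [K[x,y,z]/(x^a,y^b,z^c)]_j be the Hilbert function of the monomial complete intersection. Then h(j-2) < h(j-1) if and only if 1 ≤ j < min{a+b, a+c, b+c, (a+b+c)/2}; h(j-2) = h(j-1) if and only if min{a+b, a+c, b+c, (a+b+c)/2} ≤ j ≤ max{a, b, c, (a+b+c)/2}; and h(j-2) > h(j-1) if and only if max{a, b, c, (a+b+c)/2} < j ≤ a+b+c-1. -/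
open MvPolynomial

/-- The monomial complete intersection `(xᵃ, yᵇ, zᶜ) ⊆ K[x,y,z]`. -/
noncomputable def ciIdeal (K : Type*) [Field K] (a b c : ℕ) :
    Ideal (MvPolynomial (Fin 3) K) :=
  Ideal.span {X 0 ^ a, X 1 ^ b, X 2 ^ c}

open Finset

lemma count_range (c : ℕ) (A B : ℤ) :
    ((((Finset.range c).filter fun k : ℕ => A ≤ (k : ℤ) ∧ (k : ℤ) ≤ B).card : ℤ)) =
      max (min (c : ℤ) (B + 1) - max A 0) 0 := by
  induction c with
  | zero => simp only [Finset.range_zero, Finset.filter_empty, Finset.card_empty,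
      Nat.cast_zero]; omega
  | succ n ih =>
    rw [Finset.range_add_one, Finset.filter_insert]
    by_cases h : A ≤ (n : ℤ) ∧ (n : ℤ) ≤ B
    · rw [if_pos h, Finset.card_insert_of_notMem (by simp)]
      push_cast at ih ⊢
      omega
    · rw [if_neg h]
      push_cast at ih ⊢
      omega

noncomputable def m2 (a b : ℕ) (e : ℤ) : ℕ :=
  ((Finset.range a ×ˢ Finset.range b).filter fun p : ℕ × ℕ => (p.1 : ℤ) + p.2 = e).card

noncomputable def m3 (a b c : ℕ) (e : ℤ) : ℕ :=
  ((Finset.range a ×ˢ Finset.range b ×ˢ Finset.range c).filter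
    fun p : ℕ × ℕ × ℕ => (p.1 : ℤ) + p.2.1 + p.2.2 = e).card

lemma m2_eq (a b : ℕ) (e : ℤ) :
    (m2 a b e : ℤ) = max (min (a : ℤ) (e + 1) - max (e - b + 1) 0) 0 := by
  have : m2 a b e =
      ((Finset.range a).filter fun i : ℕ => e - b + 1 ≤ (i : ℤ) ∧ (i : ℤ) ≤ e).card := by
    unfold m2
    apply Finset.card_bij (fun p _ => p.1)
    · intro p hp
      simp only [Finset.mem_filter, Finset.mem_product, Finset.mem_range] at hp ⊢
      omega
    · intro p hp q hq h
      simp only [Finset.mem_filter, Finset.mem_product, Finset.mem_range] at hp hq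
      obtain ⟨⟨_, _⟩, h2⟩ := hp
      obtain ⟨⟨_, _⟩, h4⟩ := hq
      ext
      · exact h
      · omega
    · intro i hi
      simp only [Finset.mem_filter, Finset.mem_range] at hi
      refine ⟨(i, (e - i).toNat), ?_, rfl⟩
      simp only [Finset.mem_filter, Finset.mem_product, Finset.mem_range]
      omega
  rw [this, count_range]

lemma m3_eq_sum (a b c : ℕ) (e : ℤ) :
    m3 a b c e = ∑ k ∈ Finset.range c, m2 a b (e - k) := by
  unfold m3
  rw [Finset.card_eq_sum_card_fiberwise (f := fun p => p.2.2) (t := Finset.range c)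
    (by intro p hp
        simp only [Finset.mem_coe, Finset.mem_filter, Finset.mem_product] at hp
        exact hp.1.2.2)]
  refine Finset.sum_congr rfl fun k hk => ?_
  unfold m2
  apply Finset.card_bij (fun p _ => (p.1, p.2.1))
  · intro p hp
    simp only [Finset.mem_filter, Finset.mem_product, Finset.mem_range] at hp ⊢
    obtain ⟨⟨⟨h1, h2, h3⟩, h4⟩, h5⟩ := hp
    omega
  · intro p hp q hq h
    simp only [Finset.mem_filter] at hp hq
    injection h with h1 h2
    have h3 : p.2.2 = q.2.2 := by rw [hp.2, hq.2]
    exact Prod.ext h1 (Prod.ext h2 h3)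
  · intro q hq
    simp only [Finset.mem_filter, Finset.mem_product, Finset.mem_range] at hq
    simp only [Finset.mem_range] at hk
    refine ⟨(q.1, q.2, k), ?_, rfl⟩
    simp only [Finset.mem_filter, Finset.mem_product, Finset.mem_range]
    obtain ⟨⟨h1, h2⟩, h3⟩ := hq
    exact ⟨⟨⟨h1, h2, hk⟩, by omega⟩, trivial⟩

lemma m3_delta (a b c : ℕ) (e : ℤ) :
    (m3 a b c e : ℤ) - (m3 a b c (e - 1) : ℤ) =
      max (min (c : ℤ) (e + 1) - max (e + 1 - min (a : ℤ) b) 0) 0 -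
      max (min (c : ℤ) (e + 1 - max (a : ℤ) b) - max (e + 1 - a - b) 0) 0 := by
  rw [m3_eq_sum, m3_eq_sum]
  push_cast
  rw [← Finset.sum_sub_distrib]
  have key : ∀ k ∈ Finset.range c,
      ((m2 a b (e - k) : ℤ) - (m2 a b (e - 1 - k) : ℤ)) =
        ((if 0 ≤ e - k ∧ e - k < min (a : ℤ) b then (1:ℤ) else 0) -
         (if max (a : ℤ) b ≤ e - k ∧ e - k < (a : ℤ) + b then (1:ℤ) else 0)) := by
    intro k _
    have hm1 := m2_eq a b (e - k)
    have hm2 := m2_eq a b (e - k - 1)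
    have hco : e - 1 - (k:ℤ) = e - k - 1 := by ring
    rw [hco]
    split_ifs <;> omega
  rw [Finset.sum_congr rfl key, Finset.sum_sub_distrib]
  rw [Finset.sum_boole, Finset.sum_boole]
  have h1 : ((Finset.range c).filter fun k : ℕ => 0 ≤ e - (k:ℤ) ∧ e - (k:ℤ) < min (a : ℤ) b) =
      (Finset.range c).filter fun k : ℕ => e + 1 - min (a:ℤ) b ≤ (k:ℤ) ∧ (k:ℤ) ≤ e := by
    apply Finset.filter_congr; intro k _; constructor <;> (intro h; omega)
  have h2 : ((Finset.range c).filter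
        fun k : ℕ => max (a:ℤ) b ≤ e - (k:ℤ) ∧ e - (k:ℤ) < (a:ℤ) + b) =
      (Finset.range c).filter
        fun k : ℕ => e + 1 - a - b ≤ (k:ℤ) ∧ (k:ℤ) ≤ e - max (a:ℤ) b := by
    apply Finset.filter_congr; intro k _; constructor <;> (intro h; omega)
  rw [h1, h2, count_range, count_range]
  omega

lemma m3_neg (a b c : ℕ) (e : ℤ) (he : e < 0) : m3 a b c e = 0 := by
  unfold m3
  rw [Finset.card_eq_zero, Finset.filter_eq_empty_iff]
  intro p _
  omega

noncomputable def tripF (p : ℕ × ℕ × ℕ) : Fin 3 →₀ ℕ :=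
  Finsupp.single 0 p.1 + Finsupp.single 1 p.2.1 + Finsupp.single 2 p.2.2

lemma tripF_apply0 (p : ℕ × ℕ × ℕ) : tripF p 0 = p.1 := by
  simp [tripF, Finsupp.single_apply]

lemma tripF_apply1 (p : ℕ × ℕ × ℕ) : tripF p 1 = p.2.1 := by
  simp [tripF, Finsupp.single_apply]

lemma tripF_apply2 (p : ℕ × ℕ × ℕ) : tripF p 2 = p.2.2 := by
  simp [tripF, Finsupp.single_apply]

lemma tripF_surj (s : Fin 3 →₀ ℕ) : s = tripF (s 0, s 1, s 2) := by
  ext i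
  fin_cases i
  · simp [tripF_apply0]
  · simp [tripF_apply1]
  · simp [tripF_apply2]

lemma tripF_inj : Function.Injective tripF := by
  intro p q h
  have h0 := congrArg (fun s : Fin 3 →₀ ℕ => s 0) h
  have h1 := congrArg (fun s : Fin 3 →₀ ℕ => s 1) h
  have h2 := congrArg (fun s : Fin 3 →₀ ℕ => s 2) h
  simp only [tripF_apply0, tripF_apply1, tripF_apply2] at h0 h1 h2
  exact Prod.ext h0 (Prod.ext h1 h2)

lemma degree_fin3 (s : Fin 3 →₀ ℕ) : s.degree = s 0 + s 1 + s 2 := by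
  rw [Finsupp.degree, ← Fin.sum_univ_three (fun i => s i)]
  exact Finset.sum_subset (Finset.subset_univ _)
    (fun i _ h => Finsupp.notMem_support_iff.mp h)

lemma ciIdeal_eq (K : Type*) [Field K] (a b c : ℕ) :
    ciIdeal K a b c = Ideal.span ((fun s => monomial s (1 : K)) ''
      ({Finsupp.single 0 a, Finsupp.single 1 b, Finsupp.single 2 c} : Set (Fin 3 →₀ ℕ))) := by
  unfold ciIdeal
  congr 1
  rw [Set.image_insert_eq, Set.image_insert_eq, Set.image_singleton]
  simp [X_pow_eq_monomial]

lemma mem_ciIdeal_iff {K : Type*} [Field K] {a b c : ℕ} (x : MvPolynomial (Fin 3) K) :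
    x ∈ ciIdeal K a b c ↔ ∀ m ∈ x.support, a ≤ m 0 ∨ b ≤ m 1 ∨ c ≤ m 2 := by
  rw [ciIdeal_eq, mem_ideal_span_monomial_image]
  refine forall₂_congr fun m _ => ?_
  constructor
  · rintro ⟨si, hsi, hle⟩
    rcases hsi with rfl | rfl | rfl
    · exact Or.inl (Finsupp.single_le_iff.mp hle)
    · exact Or.inr (Or.inl (Finsupp.single_le_iff.mp hle))
    · exact Or.inr (Or.inr (Finsupp.single_le_iff.mp hle))
  · rintro (h | h | h)
    · exact ⟨Finsupp.single 0 a, Or.inl rfl, Finsupp.single_le_iff.mpr h⟩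
    · exact ⟨Finsupp.single 1 b, Or.inr (Or.inl rfl), Finsupp.single_le_iff.mpr h⟩
    · exact ⟨Finsupp.single 2 c, Or.inr (Or.inr rfl), Finsupp.single_le_iff.mpr h⟩

lemma hilb_nat (K : Type*) [Field K] (a b c d : ℕ) :
    hilb K (ciIdeal K a b c) (d : ℤ) = m3 a b c (d : ℤ) := by
  classical
  set I := ciIdeal K a b c with hI
  set T : Finset (Fin 3 →₀ ℕ) :=
    ((Finset.range a ×ˢ Finset.range b ×ˢ Finset.range c).filter
      fun p : ℕ × ℕ × ℕ => p.1 + p.2.1 + p.2.2 = d).image tripF with hT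
  have mem_T : ∀ s : Fin 3 →₀ ℕ,
      s ∈ T ↔ s 0 < a ∧ s 1 < b ∧ s 2 < c ∧ s.degree = d := by
    intro s
    rw [hT, Finset.mem_image]
    constructor
    · rintro ⟨p, hp, rfl⟩
      simp only [Finset.mem_filter, Finset.mem_product, Finset.mem_range] at hp
      obtain ⟨⟨h1, h2, h3⟩, h4⟩ := hp
      rw [degree_fin3, tripF_apply0, tripF_apply1, tripF_apply2]
      exact ⟨h1, h2, h3, h4⟩
    · rintro ⟨h1, h2, h3, h4⟩
      refine ⟨(s 0, s 1, s 2), ?_, (tripF_surj s).symm⟩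
      simp only [Finset.mem_filter, Finset.mem_product, Finset.mem_range]
      rw [degree_fin3] at h4
      exact ⟨⟨h1, h2, h3⟩, h4⟩
  -- the monomial family over T
  set fam : ↥T → MvPolynomial (Fin 3) K ⧸ I :=
    fun t => (Ideal.Quotient.mkₐ K I).toLinearMap (monomial (t : Fin 3 →₀ ℕ) (1 : K)) with hfam
  -- step 1: comp equals span of the family
  have hcomp : comp K I (d : ℤ) = Submodule.span K (Set.range fam) := by
    rw [comp, if_pos (by positivity), Int.toNat_natCast]
    rw [homogeneousSubmodule_eq_finsupp_supported, AddMonoidAlgebra.supported_eq_span_single,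
      Submodule.map_span]
    have himg : ∀ s ∈ {d' : Fin 3 →₀ ℕ | d'.degree = d},
        (Ideal.Quotient.mkₐ K I).toLinearMap (AddMonoidAlgebra.single s (1:K)) ∈
          Submodule.span K (Set.range fam) := by
      intro s hs
      by_cases hgood : s 0 < a ∧ s 1 < b ∧ s 2 < c
      · have : s ∈ T := (mem_T s).mpr ⟨hgood.1, hgood.2.1, hgood.2.2, hs⟩
        exact Submodule.subset_span ⟨⟨s, this⟩, by rw [hfam]; rw [single_eq_monomial]⟩
      · have hmem : (monomial s (1:K)) ∈ I := by
          rw [hI, mem_ciIdeal_iff]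
          intro m hm
          rw [support_monomial, if_neg (one_ne_zero)] at hm
          rw [Finset.mem_singleton] at hm
          subst hm
          omega
        have : (Ideal.Quotient.mkₐ K I).toLinearMap (AddMonoidAlgebra.single s (1:K)) = 0 := by
          rw [single_eq_monomial, AlgHom.toLinearMap_apply, Ideal.Quotient.mkₐ_eq_mk,
            Ideal.Quotient.eq_zero_iff_mem]
          exact hmem
        rw [this]
        exact Submodule.zero_mem _
    apply le_antisymm
    · rw [Submodule.span_le]
      rintro x ⟨y, ⟨s, hs, rfl⟩, rfl⟩
      exact himg s hs
    · rw [Submodule.span_le]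
      rintro x ⟨t, rfl⟩
      apply Submodule.subset_span
      refine ⟨AddMonoidAlgebra.single (t : Fin 3 →₀ ℕ) 1, ⟨(t : Fin 3 →₀ ℕ), ?_, rfl⟩, ?_⟩
      · exact ((mem_T _).mp t.2).2.2.2
      · rw [hfam, single_eq_monomial]
  -- step 2: linear independence
  have hli : LinearIndependent K fam := by
    have hbase : LinearIndependent K
        (fun s : Fin 3 →₀ ℕ => (monomial s (1 : K) : MvPolynomial (Fin 3) K)) := by
      have := (MvPolynomial.basisMonomials (Fin 3) K).linearIndependent
      simpa [MvPolynomial.coe_basisMonomials] using this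
    have hsub : LinearIndependent K
        (fun t : ↥T => (monomial (t : Fin 3 →₀ ℕ) (1 : K) : MvPolynomial (Fin 3) K)) :=
      hbase.comp Subtype.val Subtype.val_injective
    apply hsub.map
    rw [Submodule.disjoint_def]
    intro x hx hker
    have hxI : x ∈ I := by
      rw [LinearMap.mem_ker] at hker
      rwa [AlgHom.toLinearMap_apply, Ideal.Quotient.mkₐ_eq_mk,
        Ideal.Quotient.eq_zero_iff_mem] at hker
    have hsupp : (x.support : Set (Fin 3 →₀ ℕ)) ⊆ ↑T := by
      have : Set.range (fun t : ↥T => (monomial (t : Fin 3 →₀ ℕ) (1 : K))) =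
          (fun s => (AddMonoidAlgebra.single s (1:K) : MvPolynomial (Fin 3) K)) '' ↑T := by
        simp only [single_eq_monomial, Set.image_eq_range]
        exact Set.ext fun y =>
          ⟨fun ⟨t, ht⟩ => ⟨⟨t.1, t.2⟩, ht⟩, fun ⟨t, ht⟩ => ⟨⟨t.1, t.2⟩, ht⟩⟩
      rw [this, ← AddMonoidAlgebra.supported_eq_span_single, AddMonoidAlgebra.mem_supported] at hx
      exact hx
    rw [hI, mem_ciIdeal_iff] at hxI
    apply MvPolynomial.support_eq_empty.mp
    by_contra hne
    obtain ⟨m, hm⟩ := Finset.nonempty_of_ne_empty hne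
    have h1 := hxI m hm
    have h2 := (mem_T m).mp (hsupp hm)
    omega
  -- conclude
  rw [hilb, hcomp, finrank_span_eq_card hli, Fintype.card_coe, hT,
    Finset.card_image_of_injective _ tripF_inj, m3]
  congr 1
  apply Finset.filter_congr
  intro p _
  constructor <;> (intro h; omega)

lemma hilb_neg (K : Type*) [Field K] {n : ℕ} (I : Ideal (MvPolynomial (Fin n) K)) (e : ℤ)
    (he : e < 0) : hilb K I e = 0 := by
  rw [hilb, comp, if_neg (by omega)]
  exact finrank_bot K _

set_option maxHeartbeats 1000000 in
/-- **Lemma (h-ci, Reid–Roberts–Roitman).** For the Hilbert function `h` of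
`K[x,y,z]/(xᵃ,yᵇ,zᶜ)` and `1 ≤ j ≤ a+b+c-1`:
`h(j-2) < h(j-1)` iff `1 ≤ j < min{a+b, a+c, b+c, (a+b+c)/2}`;
`h(j-2) = h(j-1)` iff `min{a+b, a+c, b+c, (a+b+c)/2} ≤ j ≤ max{a, b, c, (a+b+c)/2}`;
`h(j-2) > h(j-1)` iff `max{a, b, c, (a+b+c)/2} < j ≤ a+b+c-1`. -/
theorem stmt13 {K : Type*} [Field K] (a b c : ℕ) (ha : 0 < a) (hb : 0 < b) (hc : 0 < c)
    (j : ℤ) (hj1 : 1 ≤ j) (hj2 : j ≤ (a : ℤ) + b + c - 1) :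
    ((hilb K (ciIdeal K a b c) (j - 2) < hilb K (ciIdeal K a b c) (j - 1)) ↔
      (1 ≤ j ∧ j < (a : ℤ) + b ∧ j < (a : ℤ) + c ∧ j < (b : ℤ) + c ∧ 2 * j < (a : ℤ) + b + c)) ∧
    ((hilb K (ciIdeal K a b c) (j - 2) = hilb K (ciIdeal K a b c) (j - 1)) ↔
      (((a : ℤ) + b ≤ j ∨ (a : ℤ) + c ≤ j ∨ (b : ℤ) + c ≤ j ∨ (a : ℤ) + b + c ≤ 2 * j) ∧
        (j ≤ (a : ℤ) ∨ j ≤ (b : ℤ) ∨ j ≤ (c : ℤ) ∨ 2 * j ≤ (a : ℤ) + b + c))) ∧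
    ((hilb K (ciIdeal K a b c) (j - 1) < hilb K (ciIdeal K a b c) (j - 2)) ↔
      (((a : ℤ) < j ∧ (b : ℤ) < j ∧ (c : ℤ) < j ∧ (a : ℤ) + b + c < 2 * j) ∧
        j ≤ (a : ℤ) + b + c - 1)) := by
  have e1 : ((j - 1).toNat : ℤ) = j - 1 := Int.toNat_of_nonneg (by omega)
  have h1 : hilb K (ciIdeal K a b c) (j - 1) = m3 a b c (j - 1) := by
    rw [← e1, hilb_nat, e1]
  have h2 : hilb K (ciIdeal K a b c) (j - 2) = m3 a b c (j - 2) := by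
    rcases eq_or_lt_of_le hj1 with h | h
    · rw [hilb_neg K _ _ (by omega), m3_neg a b c _ (by omega)]
    · have e2 : ((j - 2).toNat : ℤ) = j - 2 := Int.toNat_of_nonneg (by omega)
      rw [← e2, hilb_nat, e2]
  have hd := m3_delta a b c (j - 1)
  have e3 : j - 1 - 1 = j - 2 := by ring
  rw [e3] at hd
  rw [h1, h2]
  revert hd
  generalize m3 a b c (j - 1) = A
  generalize m3 a b c (j - 2) = B
  intro hd
  exact ⟨by omega, by omega, by omega⟩
end

section
/- Let I = (x^a, y^b, z^c) ⊆ R = K[x,y,z] with a, b, c positive integers and K an infinite field. If floor((a+b+c)/2) < max{a,b,c}, then R/I has the weak Lefschetz property regardless of the characteristic of K. -/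
set_option synthInstance.maxHeartbeats 1000000
set_option maxHeartbeats 1000000


open MvPolynomial

lemma deg3 (m : Fin 3 →₀ ℕ) : m.degree = m 0 + m 1 + m 2 := by
  rw [Finsupp.degree_apply, Finset.sum_subset (Finset.subset_univ _)
    (by intro i _ hi; simpa using Finsupp.notMem_support_iff.mp hi)]
  simp [Fin.sum_univ_three]

lemma mem_span_iff {K : Type*} [Field K] (e : Fin 3 → ℕ) (f : MvPolynomial (Fin 3) K) :
    f ∈ Ideal.span ((fun s => monomial s (1 : K)) '' (Set.range fun i => Finsupp.single i (e i)))
      ↔ ∀ m ∈ f.support, ∃ i, e i ≤ m i := by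
  rw [mem_ideal_span_monomial_image]
  refine forall₂_congr fun m _ => ?_
  constructor
  · rintro ⟨s, ⟨i, rfl⟩, hs⟩
    exact ⟨i, by simpa using Finsupp.single_le_iff.mp hs⟩
  · rintro ⟨i, hi⟩
    exact ⟨Finsupp.single i (e i), ⟨i, rfl⟩, Finsupp.single_le_iff.mpr hi⟩

lemma fin3_cases (k : Fin 3) : k = 0 ∨ k = 1 ∨ k = 2 := by fin_cases k <;> simp

lemma val_le_deg3 (m : Fin 3 →₀ ℕ) (k : Fin 3) : m k ≤ m 0 + m 1 + m 2 := by
  rcases fin3_cases k with rfl | rfl | rfl <;> omega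

lemma key_pos (d : ℕ) (e : Fin 3 → ℕ) (m : Fin 3 →₀ ℕ) (k : Fin 3)
    (hk : e 0 + e 1 + e 2 ≤ 2 * e k + 1) (hek : e k ≤ d + 1)
    (hdeg : m 0 + m 1 + m 2 = d + 1) (hlt : ∀ i, i ≠ k → m i < e i) : 1 ≤ m k := by
  have h0 := hlt 0; have h1 := hlt 1; have h2 := hlt 2
  rcases fin3_cases k with rfl | rfl | rfl
  · have := h1 (by decide); have := h2 (by decide); omega
  · have := h0 (by decide); have := h2 (by decide); omega
  · have := h0 (by decide); have := h1 (by decide); omega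

lemma deg3_sub (m : Fin 3 →₀ ℕ) (k : Fin 3) (h : 1 ≤ m k) :
    ((m - Finsupp.single k 1 : Fin 3 →₀ ℕ)) 0 + ((m - Finsupp.single k 1 : Fin 3 →₀ ℕ)) 1 + ((m - Finsupp.single k 1 : Fin 3 →₀ ℕ)) 2
      = m 0 + m 1 + m 2 - Finsupp.single k 1 k := by
  simp only [Finsupp.tsub_apply]
  rcases fin3_cases k with rfl | rfl | rfl <;>
    simp [Finsupp.single_apply] <;> omega

lemma master {K : Type*} [Field K] (e : Fin 3 → ℕ) (k : Fin 3)
    (hk : e 0 + e 1 + e 2 ≤ 2 * e k + 1) :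
    WLP K (Ideal.span ((fun s => monomial s (1 : K)) ''
      (Set.range fun i => Finsupp.single i (e i)))) := by
  set I : Ideal (MvPolynomial (Fin 3) K) :=
    Ideal.span ((fun s => monomial s (1 : K)) '' (Set.range fun i => Finsupp.single i (e i)))
    with hI
  have hXk : (X k : MvPolynomial (Fin 3) K) = monomial (Finsupp.single k 1) 1 := by
    rw [← X_pow_eq_monomial, pow_one]
  refine ⟨X k, isHomogeneous_X _ _, fun j => ?_⟩
  by_cases hj : 0 ≤ j
  · set d := j.toNat with hd
    by_cases hdk : d + 2 ≤ e k
    · -- injectivity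
      left
      intro x hx hzx
      rw [comp, if_pos hj] at hx
      obtain ⟨f, hf, rfl⟩ := hx
      have hf' : f.IsHomogeneous d := hf
      simp only [AlgHom.toLinearMap_apply, Ideal.Quotient.mkₐ_eq_mk] at hzx ⊢
      rw [← map_mul, Ideal.Quotient.eq_zero_iff_mem] at hzx
      rw [Ideal.Quotient.eq_zero_iff_mem]
      rw [hI, mem_span_iff] at hzx ⊢
      intro m hm
      have hmem : Finsupp.single k 1 + m ∈ (X k * f).support := by
        rw [support_X_mul]
        exact Finset.mem_map_of_mem _ hm
      obtain ⟨i, hi⟩ := hzx _ hmem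
      have hmd : m 0 + m 1 + m 2 = d := by
        have := hf' (mem_support_iff.mp hm)
        rw [← deg3, Finsupp.degree_eq_weight_one]
        exact this
      by_cases hik : i = k
      · subst hik
        exfalso
        have h1 : ((Finsupp.single i 1 + m : Fin 3 →₀ ℕ)) i = 1 + m i := by
          simp [Finsupp.add_apply, Finsupp.single_apply]
        rw [h1] at hi
        have := val_le_deg3 m i
        omega
      · refine ⟨i, ?_⟩
        have h1 : ((Finsupp.single k 1 + m : Fin 3 →₀ ℕ)) i = m i := by
          simp [Finsupp.add_apply, Finsupp.single_apply, Ne.symm hik]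
        rwa [h1] at hi
    · -- surjectivity
      right
      intro x hx
      rw [comp, if_pos (by omega : (0:ℤ) ≤ j + 1)] at hx
      obtain ⟨g, hg, rfl⟩ := hx
      have hg' : g.IsHomogeneous (j + 1).toNat := hg
      have hjd : (j + 1).toNat = d + 1 := by omega
      have hsum : (Ideal.Quotient.mkₐ K I).toLinearMap g
          = ∑ m ∈ g.support, Ideal.Quotient.mk I (monomial m (coeff m g)) := by
        simp only [AlgHom.toLinearMap_apply, Ideal.Quotient.mkₐ_eq_mk]
        rw [← map_sum]
        congr 1
        exact (support_sum_monomial_coeff g).symm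
      rw [hsum]
      apply Submodule.sum_mem
      intro m hm
      have hmd : m 0 + m 1 + m 2 = d + 1 := by
        have := hg' (mem_support_iff.mp hm)
        rw [hjd] at this
        rw [← deg3, Finsupp.degree_eq_weight_one]
        exact this
      by_cases hIm : ∃ i, i ≠ k ∧ e i ≤ m i
      · have hmemI : (monomial m (coeff m g) : MvPolynomial (Fin 3) K) ∈ I := by
          rw [hI, mem_span_iff]
          intro m' hm'
          have hm'' : m' = m := by
            have := support_monomial_subset hm'
            simpa using this
          subst hm''
          obtain ⟨i, _, hi⟩ := hIm
          exact ⟨i, hi⟩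
        rw [← Ideal.Quotient.eq_zero_iff_mem] at hmemI
        rw [hmemI]
        exact Submodule.zero_mem _
      · push_neg at hIm
        have hlt : ∀ i, i ≠ k → m i < e i := hIm
        have h1 : 1 ≤ m k := key_pos d e m k hk (by omega) hmd hlt
        set m' : Fin 3 →₀ ℕ := m - Finsupp.single k 1 with hm'
        have hle : Finsupp.single k 1 ≤ m := Finsupp.single_le_iff.mpr h1
        have hmm : Finsupp.single k 1 + m' = m := add_tsub_cancel_of_le hle
        have hm'd : m' 0 + m' 1 + m' 2 = d := by
          rw [hm']
          have := deg3_sub m k h1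
          simp only [Finsupp.single_eq_same] at this
          omega
        refine Submodule.mem_map.mpr
          ⟨Ideal.Quotient.mk I (monomial m' (coeff m g)), ?_, ?_⟩
        · rw [comp, if_pos hj]
          refine ⟨monomial m' (coeff m g), ?_, by
            simp [AlgHom.toLinearMap_apply, Ideal.Quotient.mkₐ_eq_mk]⟩
          exact isHomogeneous_monomial _ (by rw [deg3]; exact hm'd)
        · rw [LinearMap.mulLeft_apply, ← map_mul]
          congr 1
          rw [hXk, monomial_mul, one_mul, hmm]
  · left
    intro x hx _
    rw [comp, if_neg hj] at hx
    simpa using hx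


/-- **Theorem (type-one (i)).** Let `I = (xᵃ, yᵇ, zᶜ)` with `a, b, c` positive and `K` infinite.
If `⌊(a+b+c)/2⌋ < max{a,b,c}`, then `R/I` has the weak Lefschetz property regardless of the
characteristic of `K`. -/
theorem stmt14 {K : Type*} [Field K] [Infinite K] (a b c : ℕ)
    (ha : 0 < a) (hb : 0 < b) (hc : 0 < c)
    (h : (a + b + c) / 2 < max a (max b c)) :
    WLP K (ciIdeal K a b c) := by
  have hset : ciIdeal K a b c
      = Ideal.span ((fun s => monomial s (1 : K)) ''
        (Set.range fun i => Finsupp.single i (![a, b, c] i))) := by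
    unfold ciIdeal
    congr 1
    rw [← Set.range_comp]
    ext f
    constructor
    · rintro (rfl | rfl | rfl)
      · exact ⟨0, by simp [Function.comp, X_pow_eq_monomial]⟩
      · exact ⟨1, by simp [Function.comp, X_pow_eq_monomial]⟩
      · exact ⟨2, by simp [Function.comp, X_pow_eq_monomial]⟩
    · rintro ⟨i, rfl⟩
      fin_cases i
      · left; simp [Function.comp, X_pow_eq_monomial]
      · right; left; simp [Function.comp, X_pow_eq_monomial]
      · right; right; simp [Function.comp, X_pow_eq_monomial]
  rw [hset]
  have hcase : a + b + c ≤ 2 * a + 1 ∨ a + b + c ≤ 2 * b + 1 ∨ a + b + c ≤ 2 * c + 1 := by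
    rcases max_cases b c with ⟨h1, _⟩ | ⟨h1, _⟩ <;> rw [h1] at h <;>
      rcases max_cases a b with ⟨h2, _⟩ | ⟨h2, _⟩ <;>
      rcases max_cases a c with ⟨h3, _⟩ | ⟨h3, _⟩ <;> omega
  rcases hcase with hco | hco | hco
  · exact master _ 0 (by simpa using hco)
  · exact master _ 1 (by simpa using hco)
  · exact master _ 2 (by simpa using hco)
end
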